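/- arXiv:1107.0478 — 6 statements merged into one kernel-verified Lean document; each statement's English description precedes it below -/
import Mathlib

section
/- Under the stated assumptions, for every real β with 0 ≤ β < Λ, lim_{n→∞} P(X_n < 2^{−ℓ^{βn}}) = P(X_∞ = 0). -/
set_option maxHeartbeats 1000000

open MeasureTheory ProbabilityTheory Filter Topology

lemma mt_measurable_guard {Ω : Type*} [MeasurableSpace Ω] (p q : Prop) (s : Set Ω)
    (hs : MeasurableSet s) : MeasurableSet {ω | p → q → ω ∈ s} := by
  by_cases hp : p
  · by_cases hq : q
    · convert hs using 1; ext ω; simp [hp, hq]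
    · convert MeasurableSet.univ using 1; ext ω; simp [hq]
  · convert MeasurableSet.univ using 1; ext ω; simp [hp]

lemma mt_det0 (L e : ℕ → ℝ) (c lam : ℝ) (hc : 0 ≤ c) (hlam : 0 < lam)
    (he : ∀ n, 1 ≤ e n)
    (hrec : ∀ n, e n * L n - c ≤ L (n + 1))
    (M : ℕ)
    (hS : ∀ t, M ≤ t → lam * t ≤ ∑ k ∈ Finset.range t, Real.log (e k))
    (hL0 : c * (M + (1 - Real.exp (-lam))⁻¹) + 1 ≤ L 0) :
    ∀ t, M ≤ t → Real.exp (lam * t) ≤ L t := by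
  set ρ : ℝ := Real.exp (-lam) with hρ
  have hρ0 : 0 < ρ := Real.exp_pos _
  have hρ1 : ρ < 1 := Real.exp_lt_one_iff.2 (by linarith)
  set P : ℕ → ℝ := fun t => ∏ k ∈ Finset.range t, e k with hP
  have hP1 : ∀ t, 1 ≤ P t := by
    intro t
    simp only [hP]
    induction t with
    | zero => simp
    | succ t ih => rw [Finset.prod_range_succ]; nlinarith [he t]
  have hPpos : ∀ t, 0 < P t := fun t => lt_of_lt_of_le one_pos (hP1 t)
  have hPle : ∀ t, M ≤ t → Real.exp (lam * t) ≤ P t := by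
    intro t ht
    have hlog : Real.log (P t) = ∑ k ∈ Finset.range t, Real.log (e k) :=
      Real.log_prod (fun k _ => by have := he k; positivity)
    calc Real.exp (lam * t) ≤ Real.exp (Real.log (P t)) := by
          apply Real.exp_le_exp.2; rw [hlog]; exact hS t ht
      _ = P t := Real.exp_log (hPpos t)
  set W : ℕ → ℝ := fun n => ∑ j ∈ Finset.range n, (P (j + 1))⁻¹ with hW
  have key : ∀ n, P n * (L 0 - c * W n) ≤ L n := by
    intro n
    induction n with
    | zero => simp [hP, hW]
    | succ n ih =>
      have hen : 0 < e n := lt_of_lt_of_le one_pos (he n)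
      have hPn1 : P (n + 1) = P n * e n := Finset.prod_range_succ _ _
      have hWn1 : W (n + 1) = W n + (P (n + 1))⁻¹ := Finset.sum_range_succ _ _
      have hstep : P (n + 1) * (L 0 - c * W (n + 1)) = e n * (P n * (L 0 - c * W n)) - c := by
        rw [hWn1, hPn1]
        have hne : P n * e n ≠ 0 := (mul_pos (hPpos n) hen).ne'
        have hPn0 : P n ≠ 0 := (hPpos n).ne'
        field_simp
        ring
      rw [hstep]
      have h2 : e n * (P n * (L 0 - c * W n)) ≤ e n * L n :=
        mul_le_mul_of_nonneg_left ih hen.le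
      linarith [hrec n]
  have hWb : ∀ n, W n ≤ M + (1 - ρ)⁻¹ := by
    intro n
    have hterm : ∀ j ∈ Finset.range n,
        (P (j + 1))⁻¹ ≤ (if j < M then (1:ℝ) else 0) + ρ ^ j := by
      intro j _
      by_cases hj : j < M
      · simp only [hj, if_true]
        have h1 : (P (j+1))⁻¹ ≤ 1 := by
          rw [inv_le_one_iff₀]; right; exact hP1 _
        have : (0:ℝ) ≤ ρ ^ j := by positivity
        linarith
      · simp only [hj, if_false, zero_add]
        push_neg at hj
        have hPj : Real.exp (lam * ((j : ℕ) + 1 : ℕ)) ≤ P (j + 1) := hPle (j + 1) (by omega)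
        have h1 : (P (j+1))⁻¹ ≤ (Real.exp (lam * ((j : ℕ) + 1 : ℕ)))⁻¹ :=
          inv_anti₀ (Real.exp_pos _) hPj
        have h2 : (Real.exp (lam * ((j : ℕ) + 1 : ℕ)))⁻¹ = ρ ^ (j+1) := by
          rw [hρ, ← Real.exp_nat_mul, ← Real.exp_neg]
          congr 1
          push_cast
          ring
        have h3 : ρ ^ (j + 1) ≤ ρ ^ j := by
          apply pow_le_pow_of_le_one hρ0.le hρ1.le; omega
        calc (P (j+1))⁻¹ ≤ (Real.exp (lam * ((j : ℕ) + 1 : ℕ)))⁻¹ := h1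
          _ = ρ ^ (j+1) := h2
          _ ≤ ρ ^ j := h3
    calc W n ≤ ∑ j ∈ Finset.range n, ((if j < M then (1:ℝ) else 0) + ρ ^ j) :=
          Finset.sum_le_sum hterm
      _ = (∑ j ∈ Finset.range n, (if j < M then (1:ℝ) else 0))
          + ∑ j ∈ Finset.range n, ρ ^ j := Finset.sum_add_distrib
      _ ≤ M + (1 - ρ)⁻¹ := by
          gcongr
          · calc ∑ j ∈ Finset.range n, (if j < M then (1:ℝ) else 0)
                = ∑ j ∈ (Finset.range n).filter (· < M), (1:ℝ) := (Finset.sum_filter _ _).symm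
              _ = ((Finset.range n).filter (· < M)).card := by simp
              _ ≤ (Finset.range M).card := by
                  apply Nat.cast_le.2
                  apply Finset.card_le_card
                  intro x hx
                  simp only [Finset.mem_filter, Finset.mem_range] at hx ⊢
                  exact hx.2
              _ = M := by simp
          · exact sum_le_hasSum _ (fun i _ => by positivity)
              (hasSum_geometric_of_lt_one hρ0.le hρ1)
  intro t ht
  have h1 : 1 ≤ L 0 - c * W t := by
    have := mul_le_mul_of_nonneg_left (hWb t) hc
    linarith
  calc Real.exp (lam * t) ≤ P t := hPle t ht
    _ = P t * 1 := (mul_one _).symm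
    _ ≤ P t * (L 0 - c * W t) := by
        apply mul_le_mul_of_nonneg_left h1 (hPpos t).le
    _ ≤ L t := key t

lemma mt_cylinder {Ω : Type*} [MeasureSpace Ω] [IsProbabilityMeasure (ℙ : Measure Ω)]
    {ℓ : ℕ} (B : ℕ → Ω → Fin ℓ) (hBmeas : ∀ n, Measurable (B n))
    (hBindep : iIndepFun B ℙ)
    (hBunif : ∀ n (i : Fin ℓ), ℙ {ω | B n ω = i} = 1 / ℓ)
    (m₀ H : ℕ) (b : ℕ → Fin ℓ) :
    ℙ (⋂ k ∈ Finset.range H, {ω | B (m₀ + k) ω = b k}) = (1 / ℓ : ENNReal) ^ H := by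
  classical
  have hinj : Function.Injective (fun k : ℕ => m₀ + k) := add_right_injective m₀
  set S : Finset ℕ := (Finset.range H).image (fun k => m₀ + k) with hSdef
  have hset : (⋂ k ∈ Finset.range H, {ω | B (m₀ + k) ω = b k})
      = ⋂ i ∈ S, B i ⁻¹' {b (i - m₀)} := by
    ext ω
    simp only [Set.mem_iInter, hSdef, Finset.mem_image, Finset.mem_range, Set.mem_preimage,
      Set.mem_singleton_iff, Set.mem_setOf_eq]
    constructor
    · rintro h i ⟨k, hk, rfl⟩
      have : m₀ + k - m₀ = k := by omega
      rw [this]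
      exact h k hk
    · intro h k hk
      have := h (m₀ + k) ⟨k, hk, rfl⟩
      rwa [show m₀ + k - m₀ = k by omega] at this
  rw [hset,
    hBindep.measure_inter_preimage_eq_mul S (fun i _ => measurableSet_singleton _)]
  have hcard : S.card = H := by
    rw [hSdef, Finset.card_image_of_injective _ hinj, Finset.card_range]
  calc ∏ i ∈ S, ℙ (B i ⁻¹' {b (i - m₀)})
      = ∏ _i ∈ S, (1 / ℓ : ENNReal) := by
        refine Finset.prod_congr rfl fun i _ => ?_
        have : B i ⁻¹' {b (i - m₀)} = {ω | B i ω = b (i - m₀)} := rfl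
        rw [this, hBunif]
    _ = (1 / ℓ : ENNReal) ^ H := by rw [Finset.prod_const, hcard]

lemma mt_shift {Ω : Type*} [MeasureSpace Ω] [IsProbabilityMeasure (ℙ : Measure Ω)]
    {ℓ : ℕ} (hℓ : 0 < ℓ) (B : ℕ → Ω → Fin ℓ) (hBmeas : ∀ n, Measurable (B n))
    (hBindep : iIndepFun B ℙ)
    (hBunif : ∀ n (i : Fin ℓ), ℙ {ω | B n ω = i} = 1 / ℓ)
    (H : ℕ) (Φ : (ℕ → Fin ℓ) → Prop)
    (hΦ : ∀ v w : ℕ → Fin ℓ, (∀ k, k < H → v k = w k) → Φ v → Φ w) (m₀ : ℕ) :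
    ℙ {ω | Φ (fun k => B (m₀ + k) ω)} = ℙ {ω | Φ (fun k => B k ω)} := by
  classical
  -- extension of a tuple to a full sequence
  set ext : (Fin H → Fin ℓ) → (ℕ → Fin ℓ) :=
    fun b k => if h : k < H then b ⟨k, h⟩ else ⟨0, hℓ⟩ with hext
  have key : ∀ m : ℕ, ℙ {ω | Φ (fun k => B (m + k) ω)}
      = ∑ b ∈ Finset.univ.filter (fun b : Fin H → Fin ℓ => Φ (ext b)),
          (1 / ℓ : ENNReal) ^ H := by
    intro m
    have hdecomp : {ω | Φ (fun k => B (m + k) ω)}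
        = ⋃ b ∈ Finset.univ.filter (fun b : Fin H → Fin ℓ => Φ (ext b)),
            (⋂ k ∈ Finset.range H, {ω | B (m + k) ω = ext b k}) := by
      ext ω
      simp only [Set.mem_setOf_eq, Set.mem_iUnion, Finset.mem_filter, Finset.mem_univ,
        true_and, Set.mem_iInter, Finset.mem_range]
      constructor
      · intro h
        refine ⟨fun k => B (m + k.1) ω, ?_, ?_⟩
        · refine hΦ _ _ (fun k hk => ?_) h
          simp only [hext]
          rw [dif_pos hk]
        · intro k hk
          simp only [hext]
          rw [dif_pos hk]
      · rintro ⟨b, hb, hbe⟩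
        refine hΦ _ _ (fun k hk => ?_) hb
        exact (hbe k hk).symm
    rw [hdecomp]
    rw [measure_biUnion_finset ?hd ?hm]
    case hd =>
      intro b hb b' hb' hne
      simp only [Function.onFun]
      apply Set.disjoint_left.2
      intro ω hω hω'
      simp only [Set.mem_iInter, Finset.mem_range, Set.mem_setOf_eq] at hω hω'
      apply hne
      funext k
      have h1 := hω k.1 k.2
      have h2 := hω' k.1 k.2
      have : ext b k.1 = ext b' k.1 := by rw [← h1, ← h2]
      simp only [hext] at this
      rw [dif_pos k.2, dif_pos k.2] at this
      simpa using this
    case hm =>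
      intro b hb
      apply Finset.measurableSet_biInter
      intro k hk
      exact (hBmeas (m + k)) (measurableSet_singleton _)
    exact Finset.sum_congr rfl fun b hb =>
      mt_cylinder B hBmeas hBindep hBunif m H (ext b)
  rw [key m₀]
  have h0 := key 0
  simp only [zero_add] at h0
  exact h0.symm
/-- **Mori–Tanaka Proposition 15 (appendix variation): rate of polarization.**
Let `X` be a `(0,1)`-valued process driven by i.i.d. uniform choices `B n : Fin ℓ` via
deterministic maps `f i n : (0,1) → (0,1)`, i.e. `X (n+1) = f (B n) n (X n)`, with `X 0`
independent of `(B n)`. Assume `X n → X∞ ∈ {0,1}` a.s., and there are `q > 0` and integers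
`d i ≥ 1`, not all `1`, with `f i n x ≤ q * x ^ d i` on `(0,1)`. Then for every
`0 ≤ β < Λ = (1/ℓ) ∑ᵢ log_ℓ (d i)` we have
`P(X n < 2^(−ℓ^(βn))) → P(X∞ = 0)`. -/
theorem polarization_rate_lower
    {Ω : Type*} [MeasureSpace Ω] [IsProbabilityMeasure (ℙ : Measure Ω)]
    (ℓ : ℕ) (hℓ : 2 ≤ ℓ)
    (B : ℕ → Ω → Fin ℓ) (hBmeas : ∀ n, Measurable (B n))
    (hBindep : iIndepFun B ℙ)
    (hBunif : ∀ n (i : Fin ℓ), ℙ {ω | B n ω = i} = 1 / ℓ)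
    (f : Fin ℓ → ℕ → ℝ → ℝ)
    (hf : ∀ i n, ∀ x ∈ Set.Ioo (0:ℝ) 1, f i n x ∈ Set.Ioo (0:ℝ) 1)
    (X : ℕ → Ω → ℝ) (hXmeas : ∀ n, Measurable (X n))
    (hX0 : ∀ ω, X 0 ω ∈ Set.Ioo (0:ℝ) 1)
    (hX0indep : Indep (MeasurableSpace.comap (X 0) inferInstance)
      (⨆ n, MeasurableSpace.comap (B n) inferInstance) ℙ)
    (hXrec : ∀ n ω, X (n+1) ω = f (B n ω) n (X n ω))
    (Xinf : Ω → ℝ) (hXinfMeas : Measurable Xinf)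
    (hXinfVals : ∀ᵐ ω ∂ℙ, Xinf ω = 0 ∨ Xinf ω = 1)
    (hXconv : ∀ᵐ ω ∂ℙ, Tendsto (fun n => X n ω) atTop (𝓝 (Xinf ω)))
    (q : ℝ) (hq : 0 < q) (d : Fin ℓ → ℕ) (hd : ∀ i, 1 ≤ d i)
    (hdne : ¬ (∀ i, d i = 1))
    (hfd : ∀ i n, ∀ x ∈ Set.Ioo (0:ℝ) 1, f i n x ≤ q * x ^ d i) :
    ∀ β : ℝ, 0 ≤ β → β < (1 / (ℓ : ℝ)) * ∑ i, Real.logb ℓ (d i) →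
      Tendsto (fun n : ℕ => ℙ {ω | X n ω < (2 : ℝ) ^ (-(ℓ : ℝ) ^ (β * n))})
        atTop (𝓝 (ℙ {ω | Xinf ω = 0})) := by
  classical
  intro β hβ0 hβΛ
  have hℓ2 : (2:ℝ) ≤ (ℓ:ℝ) := by exact_mod_cast hℓ
  have hℓ1 : (1:ℝ) < ℓ := by linarith
  have hℓ0 : (0:ℝ) < ℓ := by linarith
  have hlogℓ : 0 < Real.log ℓ := Real.log_pos hℓ1
  set Λ : ℝ := (1 / (ℓ:ℝ)) * ∑ i, Real.logb ℓ (d i) with hΛdef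
  set β' : ℝ := (β + Λ)/2 with hβ'def
  have hββ' : β < β' := by simp only [hβ'def]; linarith
  have hβ'Λ : β' < Λ := by simp only [hβ'def]; linarith
  have hβ'pos : 0 < β' := lt_of_le_of_lt hβ0 hββ'
  set lam : ℝ := β' * Real.log ℓ with hlamdef
  have hlam : 0 < lam := mul_pos hβ'pos hlogℓ
  set g : Fin ℓ → ℝ := fun i => Real.log (d i) with hgdef
  set μY : ℝ := ∑ i, (ℓ:ℝ)⁻¹ * g i with hμYdef
  have hμY : Λ * Real.log ℓ = μY := by
    have hterm : ∀ i : Fin ℓ, Real.logb ℓ (d i) * Real.log ℓ = g i := by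
      intro i
      rw [hgdef, Real.logb]
      field_simp
    calc Λ * Real.log ℓ = (1/(ℓ:ℝ)) * ∑ i, (Real.logb ℓ (d i) * Real.log ℓ) := by
          rw [hΛdef, ← Finset.sum_mul]; ring
      _ = (1/(ℓ:ℝ)) * ∑ i, g i := by rw [Finset.sum_congr rfl (fun i _ => hterm i)]
      _ = μY := by rw [hμYdef, Finset.mul_sum]; exact Finset.sum_congr rfl (fun i _ => by rw [one_div])
  have hlamμ : lam < μY := by
    rw [← hμY, hlamdef]
    exact mul_lt_mul_of_pos_right hβ'Λ hlogℓ
  -- membership of the process in (0,1)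
  have hXmem : ∀ n ω, X n ω ∈ Set.Ioo (0:ℝ) 1 := by
    intro n
    induction n with
    | zero => exact hX0
    | succ n ih => intro ω; rw [hXrec]; exact hf _ _ _ (ih ω)
  -- one-step recursion for -log X
  set c : ℝ := max (Real.log q) 0 with hcdef
  have hc : 0 ≤ c := le_max_right _ _
  have hrecL : ∀ n ω, (d (B n ω) : ℝ) * (-Real.log (X n ω)) - c ≤ -Real.log (X (n+1) ω) := by
    intro n ω
    have hx := hXmem n ω
    have hx1 := hXmem (n+1) ω
    have hle : X (n+1) ω ≤ q * X n ω ^ (d (B n ω)) := by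
      rw [hXrec]; exact hfd _ n _ hx
    have hpow : (0:ℝ) < X n ω ^ (d (B n ω)) := pow_pos hx.1 _
    have hpos : (0:ℝ) < q * X n ω ^ (d (B n ω)) := mul_pos hq hpow
    have hlog : Real.log (X (n+1) ω) ≤ Real.log q + (d (B n ω) : ℝ) * Real.log (X n ω) := by
      calc Real.log (X (n+1) ω) ≤ Real.log (q * X n ω ^ (d (B n ω))) :=
            (Real.log_le_log_iff hx1.1 hpos).2 hle
        _ = Real.log q + Real.log (X n ω ^ (d (B n ω))) := Real.log_mul (ne_of_gt hq) (ne_of_gt hpow)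
        _ = Real.log q + (d (B n ω) : ℝ) * Real.log (X n ω) := by rw [Real.log_pow]
    have hqc : Real.log q ≤ c := le_max_left _ _
    nlinarith [hlog, hqc]
  -- SLLN setup
  set Y : ℕ → Ω → ℝ := fun k ω => g (B k ω) with hYdef
  have hgmeas : Measurable g := measurable_of_countable g
  have hYmeas : ∀ k, Measurable (Y k) := fun k => hgmeas.comp (hBmeas k)
  have hident : ∀ k, IdentDistrib (Y k) (Y 0) ℙ ℙ := by
    intro k
    have hB : IdentDistrib (B k) (B 0) ℙ ℙ := by
      refine ⟨(hBmeas k).aemeasurable, (hBmeas 0).aemeasurable, ?_⟩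
      apply MeasureTheory.Measure.ext_of_singleton
      intro i
      rw [Measure.map_apply (hBmeas k) (measurableSet_singleton i),
          Measure.map_apply (hBmeas 0) (measurableSet_singleton i)]
      have h1 : B k ⁻¹' {i} = {ω | B k ω = i} := rfl
      have h2 : B 0 ⁻¹' {i} = {ω | B 0 ω = i} := rfl
      rw [h1, h2, hBunif, hBunif]
    exact hB.comp hgmeas
  have hindepY : Pairwise (Function.onFun (IndepFun · · ℙ) Y) := by
    intro i j hij
    exact (hBindep.indepFun hij).comp hgmeas hgmeas
  have hint : Integrable (Y 0) ℙ := by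
    apply Integrable.mono' (integrable_const (∑ i, |g i|)) ((hYmeas 0).aestronglyMeasurable)
    filter_upwards with ω
    rw [Real.norm_eq_abs]
    exact Finset.single_le_sum (fun i _ => abs_nonneg (g i)) (Finset.mem_univ (B 0 ω))
  have hmean : ℙ[Y 0] = μY := by
    have h1 : ℙ[Y 0] = ∫ x, g x ∂(Measure.map (B 0) ℙ) := by
      rw [integral_map (hBmeas 0).aemeasurable hgmeas.aestronglyMeasurable]
    have hprob : IsProbabilityMeasure (Measure.map (B 0) ℙ) :=
      Measure.isProbabilityMeasure_map (hBmeas 0).aemeasurable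
    rw [h1, integral_fintype (Integrable.of_finite), hμYdef]
    refine Finset.sum_congr rfl fun i _ => ?_
    rw [measureReal_def, Measure.map_apply (hBmeas 0) (measurableSet_singleton i)]
    have h2 : B 0 ⁻¹' {i} = {ω | B 0 ω = i} := rfl
    rw [h2, hBunif 0 i]
    rw [smul_eq_mul]
    congr 1
    simp [ENNReal.toReal_div]
  have slln := strong_law_ae_real Y hint hindepY hident
  have hae : ∀ᵐ ω ∂ℙ, ∃ M : ℕ, ∀ t, M ≤ t → lam * t ≤ ∑ k ∈ Finset.range t, Y k ω := by
    filter_upwards [slln] with ω hω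
    rw [hmean] at hω
    have hev : ∀ᶠ (t:ℕ) in atTop, lam < (∑ k ∈ Finset.range t, Y k ω) / t :=
      hω.eventually (eventually_gt_nhds hlamμ)
    obtain ⟨M, hM⟩ := Filter.eventually_atTop.1 (hev.and (eventually_ge_atTop 1))
    refine ⟨M + 1, fun t ht => ?_⟩
    obtain ⟨h1, h2⟩ := hM t (by omega)
    have ht0 : (0:ℝ) < t := by
      have : (1:ℕ) ≤ t := h2
      exact_mod_cast Nat.lt_of_lt_of_le Nat.zero_lt_one this
    have := (lt_div_iff₀ ht0).1 h1
    linarith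
  -- the shifted LLN events
  set ev : ℕ → ℕ → Set Ω :=
    fun m M => {ω | ∀ t, M ≤ t → lam * t ≤ ∑ k ∈ Finset.range t, Y (m + k) ω} with hevdef
  have hevmeas : ∀ m M, MeasurableSet (ev m M) := by
    intro m M
    have : ev m M = ⋂ t : ℕ, {ω | M ≤ t → True →
        ω ∈ {ω' | lam * t ≤ ∑ k ∈ Finset.range t, Y (m + k) ω'}} := by
      ext ω; simp only [hevdef, Set.mem_iInter, Set.mem_setOf_eq, true_implies, forall_const]
    rw [this]
    exact MeasurableSet.iInter fun t => mt_measurable_guard _ _ _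
      (measurableSet_le measurable_const (Finset.measurable_sum _ (fun k _ => hYmeas (m + k))))
  have hshift : ∀ m M, ℙ (ev m M) = ℙ (ev 0 M) := by
    intro m M
    set evH : ℕ → ℕ → Set Ω := fun m' H =>
      {ω | ∀ t, M ≤ t → t ≤ H → lam * t ≤ ∑ k ∈ Finset.range t, Y (m' + k) ω} with hevHdef
    have hmeasH : ∀ m' H, MeasurableSet (evH m' H) := by
      intro m' H
      have : evH m' H = ⋂ t : ℕ, {ω | M ≤ t → t ≤ H →
          ω ∈ {ω' | lam * t ≤ ∑ k ∈ Finset.range t, Y (m' + k) ω'}} := by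
        ext ω; simp only [hevHdef, Set.mem_iInter, Set.mem_setOf_eq]
      rw [this]
      exact MeasurableSet.iInter fun t => mt_measurable_guard _ _ _
        (measurableSet_le measurable_const (Finset.measurable_sum _ (fun k _ => hYmeas (m' + k))))
    have hanti : ∀ m', Antitone (evH m') := by
      intro m' H H' hHH' ω hω t ht htH
      exact hω t ht (le_trans htH hHH')
    have hInter : ∀ m', (⋂ H, evH m' H) = ev m' M := by
      intro m'
      ext ω
      simp only [Set.mem_iInter, hevdef, hevHdef, Set.mem_setOf_eq]
      constructor
      · intro h t ht; exact h t t ht le_rfl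
      · intro h H t ht _; exact h t ht
    have hHshift : ∀ H, ℙ (evH m H) = ℙ (evH 0 H) := by
      intro H
      have h := mt_shift (show 0 < ℓ by omega) B hBmeas hBindep hBunif H
        (fun v => ∀ t, M ≤ t → t ≤ H → lam * t ≤ ∑ k ∈ Finset.range t, g (v k))
        (by
          intro v w hvw hv t ht htH
          have hsum : ∑ k ∈ Finset.range t, g (v k) = ∑ k ∈ Finset.range t, g (w k) :=
            Finset.sum_congr rfl fun k hk => by
              rw [hvw k (lt_of_lt_of_le (Finset.mem_range.1 hk) htH)]
          rw [← hsum]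
          exact hv t ht htH) m
      have e1 : {ω | ∀ t, M ≤ t → t ≤ H →
          lam * t ≤ ∑ k ∈ Finset.range t, g ((fun k => B (m + k) ω) k)} = evH m H := by
        ext ω; simp only [hevHdef, hYdef, Set.mem_setOf_eq]
      have e0 : {ω | ∀ t, M ≤ t → t ≤ H →
          lam * t ≤ ∑ k ∈ Finset.range t, g ((fun k => B k ω) k)} = evH 0 H := by
        ext ω; simp only [hevHdef, hYdef, Set.mem_setOf_eq, zero_add]
      rw [e1, e0] at h
      exact h
    have h1 : Tendsto (fun H => ℙ (evH m H)) atTop (𝓝 (ℙ (ev m M))) := by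
      rw [← hInter m]
      exact tendsto_measure_iInter_atTop (fun H => (hmeasH m H).nullMeasurableSet) (hanti m)
        ⟨0, measure_ne_top ℙ _⟩
    have h2 : Tendsto (fun H => ℙ (evH 0 H)) atTop (𝓝 (ℙ (ev 0 M))) := by
      rw [← hInter 0]
      exact tendsto_measure_iInter_atTop (fun H => (hmeasH 0 H).nullMeasurableSet) (hanti 0)
        ⟨0, measure_ne_top ℙ _⟩
    rw [show (fun H => ℙ (evH m H)) = (fun H => ℙ (evH 0 H)) from funext hHshift] at h1
    exact tendsto_nhds_unique h1 h2
  set P₀ : ENNReal := ℙ {ω | Xinf ω = 0} with hP₀def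
  rw [tendsto_order]
  constructor
  · -- lower bound
    intro a ha
    have hP₀top : P₀ ≠ ⊤ := measure_ne_top ℙ _
    have hP₀0 : P₀ ≠ 0 := (lt_of_le_of_lt zero_le ha).ne'
    have hPa : P₀ - a ≠ 0 := by
      rw [ne_eq, tsub_eq_zero_iff_le]
      exact not_le.2 ha
    set ε : ENNReal := (P₀ - a) / 3 with hεdef
    have hε0 : ε ≠ 0 := by
      rw [hεdef, ne_eq, ENNReal.div_eq_zero_iff]
      push_neg
      exact ⟨hPa, by norm_num⟩
    have hεtop : ε ≠ ⊤ := by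
      rw [hεdef]
      exact (ENNReal.div_lt_top (ne_top_of_le_ne_top hP₀top tsub_le_self) (by norm_num)).ne
    -- choose M
    have hbadanti : Antitone (fun M => (ev 0 M)ᶜ) := by
      intro M M' hMM'
      apply Set.compl_subset_compl.2
      intro ω hω t ht
      exact hω t (le_trans hMM' ht)
    have hbadnull : ℙ (⋂ M, (ev 0 M)ᶜ) = 0 := by
      apply measure_mono_null ?_ (ae_iff.1 hae)
      intro ω hω
      simp only [Set.mem_iInter, Set.mem_compl_iff, hevdef, Set.mem_setOf_eq] at hω
      simp only [Set.mem_setOf_eq]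
      intro ⟨M, hM⟩
      exact hω M (fun t ht => by simpa using hM t ht)
    have hbadlim : Tendsto (fun M => ℙ ((ev 0 M)ᶜ)) atTop (𝓝 0) := by
      have := tendsto_measure_iInter_atTop
        (fun M => ((hevmeas 0 M).compl).nullMeasurableSet) hbadanti ⟨0, measure_ne_top ℙ _⟩
      rwa [hbadnull] at this
    obtain ⟨M, hM⟩ := (hbadlim.eventually_lt_const (pos_iff_ne_zero.2 hε0)).exists
    set K : ℝ := c * (M + (1 - Real.exp (-lam))⁻¹) + 1 with hKdef
    set A : ℕ → Set Ω := fun m => {ω | Xinf ω = 0 ∧ ∀ n, m ≤ n → X n ω ≤ Real.exp (-K)}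
      with hAdef
    have hAmono : Monotone A := by
      intro m m' hmm' ω hω
      exact ⟨hω.1, fun n hn => hω.2 n (le_trans hmm' hn)⟩
    have hAunion : P₀ ≤ ℙ (⋃ m, A m) := by
      have hsub : {ω | Xinf ω = 0} ⊆ (⋃ m, A m) ∪ {ω | ¬ Tendsto (fun n => X n ω) atTop (𝓝 (Xinf ω))} := by
        intro ω hω
        by_cases hT : Tendsto (fun n => X n ω) atTop (𝓝 (Xinf ω))
        · left
          have h0 : Xinf ω = 0 := hω
          rw [h0] at hT
          have : ∀ᶠ n in atTop, X n ω < Real.exp (-K) :=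
            hT.eventually_lt_const (Real.exp_pos _)
          obtain ⟨m, hm⟩ := Filter.eventually_atTop.1 this
          exact Set.mem_iUnion.2 ⟨m, h0, fun n hn => (hm n hn).le⟩
        · right; exact hT
      calc P₀ ≤ ℙ ((⋃ m, A m) ∪ {ω | ¬ Tendsto (fun n => X n ω) atTop (𝓝 (Xinf ω))}) :=
            measure_mono hsub
        _ ≤ ℙ (⋃ m, A m) + ℙ {ω | ¬ Tendsto (fun n => X n ω) atTop (𝓝 (Xinf ω))} :=
            measure_union_le _ _
        _ = ℙ (⋃ m, A m) := by rw [ae_iff.1 hXconv, add_zero]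
    have hAlt : P₀ - ε < ℙ (⋃ m, A m) :=
      lt_of_lt_of_le (ENNReal.sub_lt_self hP₀top hP₀0 hε0) hAunion
    obtain ⟨m₀, hm₀⟩ := ((tendsto_measure_iUnion_atTop hAmono).eventually_const_lt hAlt).exists
    have hGc : ℙ ((ev m₀ M)ᶜ) < ε := by
      rw [prob_compl_eq_one_sub (hevmeas m₀ M), hshift m₀ M,
        ← prob_compl_eq_one_sub (hevmeas 0 M)]
      exact hM
    have hEprob : a < ℙ (A m₀ ∩ ev m₀ M) := by
      have h1 : ℙ (A m₀) ≤ ℙ (A m₀ ∩ ev m₀ M) + ℙ ((ev m₀ M)ᶜ) := by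
        calc ℙ (A m₀) ≤ ℙ (A m₀ ∩ ev m₀ M) + ℙ (A m₀ \ ev m₀ M) :=
              measure_le_inter_add_diff _ _ _
          _ ≤ ℙ (A m₀ ∩ ev m₀ M) + ℙ ((ev m₀ M)ᶜ) := by
              gcongr
              exact fun ω hω => hω.2
      have h3 : a + 3 * ε = P₀ := by
        rw [hεdef, ENNReal.mul_div_cancel' (by norm_num) (by norm_num)]
        exact add_tsub_cancel_of_le ha.le
      have hεP : ε ≤ P₀ := by
        have h1 : ε ≤ P₀ - a := by
          calc ε = (P₀ - a) * 3⁻¹ := by rw [hεdef, div_eq_mul_inv]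
            _ ≤ (P₀ - a) * 1 := mul_le_mul_right (ENNReal.inv_le_one.2 (by norm_num)) _
            _ = P₀ - a := mul_one _
        exact le_trans h1 tsub_le_self
      have h4 : P₀ < ℙ (A m₀) + ε := by
        have := hm₀
        rwa [ENNReal.sub_lt_iff_lt_right hεtop hεP] at this
      have h5 : P₀ < ℙ (A m₀ ∩ ev m₀ M) + ε + ε :=
        lt_of_lt_of_le h4 (by
          have := le_trans h1 (add_le_add_right hGc.le _)
          calc ℙ (A m₀) + ε ≤ (ℙ (A m₀ ∩ ev m₀ M) + ε) + ε := by
                exact add_le_add_left this ε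
            _ = ℙ (A m₀ ∩ ev m₀ M) + ε + ε := rfl)
      have h6 : a + ε + 2 * ε < ℙ (A m₀ ∩ ev m₀ M) + 2 * ε := by
        calc a + ε + 2 * ε = a + 3 * ε := by ring
          _ = P₀ := h3
          _ < ℙ (A m₀ ∩ ev m₀ M) + ε + ε := h5
          _ = ℙ (A m₀ ∩ ev m₀ M) + 2 * ε := by ring
      have h7 : a + ε < ℙ (A m₀ ∩ ev m₀ M) :=
        (ENNReal.add_lt_add_iff_right (by
          simp only [ne_eq, ENNReal.mul_eq_top]
          push_neg
          exact ⟨fun _ => hεtop, fun h => absurd h (by norm_num)⟩)).1 h6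
      exact lt_of_le_of_lt le_self_add h7
    -- pointwise inclusion for large n
    obtain ⟨N₁, hN₁⟩ := exists_nat_ge (β' * m₀ / (β' - β))
    rw [Filter.eventually_atTop]
    refine ⟨max (m₀ + M) N₁, fun n hn => ?_⟩
    have hnm : m₀ + M ≤ n := le_trans (le_max_left _ _) hn
    have hnN₁ : (N₁ : ℝ) ≤ n := by exact_mod_cast le_trans (le_max_right _ _) hn
    refine lt_of_lt_of_le hEprob (measure_mono ?_)
    intro ω hω
    obtain ⟨hωA, hωG⟩ := hω
    have hdet := mt_det0 (fun t => -Real.log (X (m₀ + t) ω))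
      (fun t => (d (B (m₀ + t) ω) : ℝ)) c lam hc hlam
      (fun t => by
        show (1:ℝ) ≤ ((d (B (m₀ + t) ω) : ℕ) : ℝ)
        exact_mod_cast hd _)
      (fun t => by
        show (d (B (m₀ + t) ω) : ℝ) * (-Real.log (X (m₀ + t) ω)) - c ≤
          -Real.log (X (m₀ + (t + 1)) ω)
        exact hrecL (m₀ + t) ω)
      M
      (fun t ht => hωG t ht)
      (by
        show c * ((M:ℝ) + (1 - Real.exp (-lam))⁻¹) + 1 ≤ -Real.log (X (m₀ + 0) ω)
        have hx := hXmem m₀ ω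
        have hXm₀ : X m₀ ω ≤ Real.exp (-K) := hωA.2 m₀ le_rfl
        have hlog : Real.log (X m₀ ω) ≤ -K := (Real.log_le_iff_le_exp hx.1).2 hXm₀
        have hKK : K = c * ((M:ℝ) + (1 - Real.exp (-lam))⁻¹) + 1 := hKdef
        have hXeq : X (m₀ + 0) ω = X m₀ ω := rfl
        rw [hXeq, ← hKK]
        linarith)
    set t : ℕ := n - m₀ with htdef
    have hmt : m₀ + t = n := by omega
    have htM : M ≤ t := by omega
    have hLn : Real.exp (lam * t) ≤ -Real.log (X n ω) := by
      have h2 : Real.exp (lam * t) ≤ -Real.log (X (m₀ + t) ω) := hdet t htM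
      rwa [hmt] at h2
    have hXpos := (hXmem n ω).1
    simp only [Set.mem_setOf_eq]
    rw [show (2:ℝ) ^ (-(ℓ:ℝ) ^ (β * n)) = Real.exp (Real.log 2 * (-(ℓ:ℝ) ^ (β * (n:ℝ)))) from
      Real.rpow_def_of_pos two_pos _]
    rw [show X n ω = Real.exp (Real.log (X n ω)) from (Real.exp_log hXpos).symm]
    apply Real.exp_lt_exp.2
    have e1 : (ℓ:ℝ) ^ (β * (n:ℝ)) * Real.log 2 < Real.exp (lam * t) := by
      have h2 : Real.exp (lam * t) = (ℓ:ℝ) ^ (β' * (t:ℝ)) := by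
        rw [Real.rpow_def_of_pos hℓ0]
        congr 1
        rw [hlamdef]; ring
      rw [h2]
      have htreal : (t:ℝ) = (n:ℝ) - (m₀:ℝ) := by
        rw [htdef]
        have : m₀ ≤ n := by omega
        push_cast [Nat.cast_sub this]
        ring
      have hexpo : β * (n:ℝ) ≤ β' * (t:ℝ) := by
        rw [htreal]
        have hd1 : 0 < β' - β := by linarith
        have := (div_le_iff₀ hd1).1 hN₁
        nlinarith
      have h3 : (ℓ:ℝ) ^ (β * (n:ℝ)) ≤ (ℓ:ℝ) ^ (β' * (t:ℝ)) :=
        Real.rpow_le_rpow_of_exponent_le hℓ1.le hexpo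
      have h4 : Real.log 2 < 1 := by
        have := Real.log_two_lt_d9
        linarith
      have h5 : 0 < (ℓ:ℝ) ^ (β * (n:ℝ)) := Real.rpow_pos_of_pos hℓ0 _
      nlinarith
    nlinarith [hLn, e1]
  · -- upper bound
    intro b hb
    set U : ℕ → Set Ω := fun m =>
      {ω | Xinf ω = 1} ∩ ⋃ (n : ℕ) (_ : m ≤ n), {ω | X n ω ≤ 1/2} with hUdef
    have hUmeas : ∀ m, MeasurableSet (U m) := by
      intro m
      apply MeasurableSet.inter
      · exact hXinfMeas (measurableSet_singleton 1)
      · exact MeasurableSet.iUnion fun n => MeasurableSet.iUnion fun _ =>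
          measurableSet_le (hXmeas n) measurable_const
    have hUanti : Antitone U := by
      intro m m' hmm'
      apply Set.inter_subset_inter_right
      intro ω hω
      obtain ⟨n, hn⟩ := Set.mem_iUnion.1 hω
      obtain ⟨hmn, hωn⟩ := Set.mem_iUnion.1 hn
      exact Set.mem_iUnion.2 ⟨n, Set.mem_iUnion.2 ⟨le_trans hmm' hmn, hωn⟩⟩
    have hUnull : ℙ (⋂ m, U m) = 0 := by
      apply measure_mono_null ?_ (ae_iff.1 hXconv)
      intro ω hω
      simp only [Set.mem_iInter, hUdef, Set.mem_inter_iff, Set.mem_setOf_eq] at hω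
      simp only [Set.mem_setOf_eq]
      intro hT
      have h1 : Xinf ω = 1 := (hω 0).1
      rw [h1] at hT
      have : ∀ᶠ n in atTop, (1:ℝ)/2 < X n ω := hT.eventually_const_lt (by norm_num)
      obtain ⟨m, hm⟩ := Filter.eventually_atTop.1 this
      obtain ⟨n, hn⟩ := Set.mem_iUnion.1 (hω m).2
      obtain ⟨hmn, hωn⟩ := Set.mem_iUnion.1 hn
      exact absurd hωn (not_le.2 (hm n hmn))
    have hUlim : Tendsto (fun m => ℙ (U m)) atTop (𝓝 0) := by
      have := tendsto_measure_iInter_atTop (fun m => (hUmeas m).nullMeasurableSet) hUanti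
        ⟨0, measure_ne_top ℙ _⟩
      rwa [hUnull] at this
    have hsub : ∀ n : ℕ, ℙ {ω | X n ω < (2:ℝ) ^ (-(ℓ:ℝ) ^ (β * n))} ≤ P₀ + ℙ (U n) := by
      intro n
      have hthr : (2:ℝ) ^ (-(ℓ:ℝ) ^ (β * (n:ℝ))) ≤ 1/2 := by
        have h1 : (1:ℝ) ≤ (ℓ:ℝ) ^ (β * (n:ℝ)) :=
          Real.one_le_rpow hℓ1.le (by positivity)
        calc (2:ℝ) ^ (-(ℓ:ℝ) ^ (β * (n:ℝ))) ≤ (2:ℝ) ^ (-(1:ℝ)) :=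
              Real.rpow_le_rpow_of_exponent_le one_le_two (by linarith)
          _ = 1/2 := by
              rw [show (-(1:ℝ)) = ((-1 : ℤ) : ℝ) by norm_num, Real.rpow_intCast]
              norm_num
      have hincl2 : {ω | X n ω < (2:ℝ) ^ (-(ℓ:ℝ) ^ (β * (n:ℝ)))} ⊆
          {ω | Xinf ω = 0} ∪ ({ω | ¬(Xinf ω = 0 ∨ Xinf ω = 1)} ∪ U n) := by
        intro ω hω
        simp only [Set.mem_setOf_eq] at hω
        by_cases h0 : Xinf ω = 0
        · exact Or.inl h0
        by_cases h1 : Xinf ω = 1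
        · refine Or.inr (Or.inr ⟨h1, ?_⟩)
          exact Set.mem_iUnion.2 ⟨n, Set.mem_iUnion.2 ⟨le_rfl, le_of_lt (lt_of_lt_of_le hω hthr)⟩⟩
        · exact Or.inr (Or.inl (by simp [h0, h1]))
      calc ℙ {ω | X n ω < (2:ℝ) ^ (-(ℓ:ℝ) ^ (β * n))}
          ≤ ℙ ({ω | Xinf ω = 0}) + ℙ ({ω | ¬(Xinf ω = 0 ∨ Xinf ω = 1)} ∪ U n) :=
            le_trans (measure_mono hincl2) (measure_union_le _ _)
        _ ≤ P₀ + (ℙ {ω | ¬(Xinf ω = 0 ∨ Xinf ω = 1)} + ℙ (U n)) :=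
            add_le_add le_rfl (measure_union_le _ _)
        _ = P₀ + ℙ (U n) := by rw [ae_iff.1 hXinfVals, zero_add]
    have hlim2 : Tendsto (fun n => P₀ + ℙ (U n)) atTop (𝓝 P₀) := by
      have h := hUlim.const_add P₀
      rwa [add_zero] at h
    filter_upwards [hlim2.eventually_lt_const hb] with n hn
    exact lt_of_le_of_lt (hsub n) hn
end

section
/- Under the stated assumptions, for every fixed ρ ∈ (0,1), lim_{n→∞} P(X_n ≤ ρⁿ) = P(X_∞ = 0). -/
open MeasureTheory ProbabilityTheory Filter Topology

set_option maxHeartbeats 1000000 in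
/-- **Proposition `CnToXinf`.**
Let `X` be a `(0,1)`-valued process driven by i.i.d. uniform choices `B n : Fin ℓ` via
deterministic maps `f i n : (0,1) → (0,1)`, i.e. `X (n+1) = f (B n) n (X n)`, with `X 0`
independent of `(B n)`. Assume `X n → X∞ ∈ {0,1}` a.s., and there are `q > 0` and integers
`d i ≥ 1`, not all `1`, with `f i n x ≤ q * x ^ d i` on `(0,1)`. Then for every fixed
`ρ ∈ (0,1)` we have `P(X n ≤ ρ^n) → P(X∞ = 0)`. -/
theorem exponential_decay_any_base
    {Ω : Type*} [MeasureSpace Ω] [IsProbabilityMeasure (ℙ : Measure Ω)]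
    (ℓ : ℕ) (hℓ : 2 ≤ ℓ)
    (B : ℕ → Ω → Fin ℓ) (hBmeas : ∀ n, Measurable (B n))
    (hBindep : iIndepFun B ℙ)
    (hBunif : ∀ n (i : Fin ℓ), ℙ {ω | B n ω = i} = 1 / ℓ)
    (f : Fin ℓ → ℕ → ℝ → ℝ)
    (hf : ∀ i n, ∀ x ∈ Set.Ioo (0:ℝ) 1, f i n x ∈ Set.Ioo (0:ℝ) 1)
    (X : ℕ → Ω → ℝ) (hXmeas : ∀ n, Measurable (X n))
    (hX0 : ∀ ω, X 0 ω ∈ Set.Ioo (0:ℝ) 1)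
    (hX0indep : Indep (MeasurableSpace.comap (X 0) inferInstance)
      (⨆ n, MeasurableSpace.comap (B n) inferInstance) ℙ)
    (hXrec : ∀ n ω, X (n+1) ω = f (B n ω) n (X n ω))
    (Xinf : Ω → ℝ) (hXinfMeas : Measurable Xinf)
    (hXinfVals : ∀ᵐ ω ∂ℙ, Xinf ω = 0 ∨ Xinf ω = 1)
    (hXconv : ∀ᵐ ω ∂ℙ, Tendsto (fun n => X n ω) atTop (𝓝 (Xinf ω)))
    (q : ℝ) (hq : 0 < q) (d : Fin ℓ → ℕ) (hd : ∀ i, 1 ≤ d i)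
    (hdne : ¬ (∀ i, d i = 1))
    (hfd : ∀ i n, ∀ x ∈ Set.Ioo (0:ℝ) 1, f i n x ≤ q * x ^ d i) :
    ∀ ρ : ℝ, ρ ∈ Set.Ioo (0:ℝ) 1 →
      Tendsto (fun n : ℕ => ℙ {ω | X n ω ≤ ρ ^ n})
        atTop (𝓝 (ℙ {ω | Xinf ω = 0})) := by
  intro ρ hρ
  obtain ⟨hρ0, hρ1⟩ := hρ
  push_neg at hdne
  obtain ⟨i₀, hi₀⟩ := hdne
  have hdi₀ : 2 ≤ d i₀ := by
    have := hd i₀; omega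
  -- the process stays in (0,1)
  have hXio : ∀ n ω, X n ω ∈ Set.Ioo (0:ℝ) 1 := by
    intro n
    induction n with
    | zero => exact hX0
    | succ n ih => intro ω; rw [hXrec]; exact hf _ _ _ (ih ω)
  have hℓR : (0:ℝ) < ℓ := by positivity
  set c : ℝ := -Real.log ρ with hc
  have hcpos : 0 < c := by
    have := Real.log_neg hρ0 hρ1; simp only [hc]; linarith
  set lq : ℝ := max (Real.log q) 0 with hlqdef
  have hlq0 : 0 ≤ lq := le_max_right _ _
  set s : ℝ := 2 * ℓ * (lq + 2 * c) with hs
  have hspos : 0 < s := by positivity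
  -- indicator variables of hitting i₀
  set g : Fin ℓ → ℝ := fun j => if j = i₀ then 1 else 0 with hg
  have hgmeas : Measurable g := Measurable.of_discrete
  set Y : ℕ → Ω → ℝ := fun n => g ∘ B n with hYdef
  have hYmeas : ∀ n, Measurable (Y n) := fun n => hgmeas.comp (hBmeas n)
  have hYval : ∀ n ω, Y n ω = if B n ω = i₀ then 1 else 0 := fun n ω => rfl
  have hY01 : ∀ n ω, 0 ≤ Y n ω ∧ Y n ω ≤ 1 := by
    intro n ω; rw [hYval]; split <;> norm_num
  -- strong law of large numbers for Y
  have hident : ∀ n, IdentDistrib (Y n) (Y 0) ℙ ℙ := by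
    intro n
    have hB : IdentDistrib (B n) (B 0) ℙ ℙ := by
      refine ⟨(hBmeas n).aemeasurable, (hBmeas 0).aemeasurable, ?_⟩
      apply MeasureTheory.Measure.ext_of_singleton
      intro i
      rw [Measure.map_apply (hBmeas n) (measurableSet_singleton i),
        Measure.map_apply (hBmeas 0) (measurableSet_singleton i)]
      have h1 : B n ⁻¹' {i} = {ω | B n ω = i} := rfl
      have h2 : B 0 ⁻¹' {i} = {ω | B 0 ω = i} := rfl
      rw [h1, h2, hBunif, hBunif]
    exact hB.comp hgmeas
  have hint : Integrable (Y 0) ℙ := by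
    refine Integrable.mono' (integrable_const (1:ℝ)) (hYmeas 0).aestronglyMeasurable ?_
    refine Eventually.of_forall fun ω => ?_
    rw [Real.norm_eq_abs, abs_of_nonneg (hY01 0 ω).1]
    exact (hY01 0 ω).2
  have hpair : Pairwise (Function.onFun (IndepFun · · ℙ) Y) := by
    intro i j hij
    exact (hBindep.indepFun hij).comp hgmeas hgmeas
  have hEY : (ℙ[Y 0] : ℝ) = 1 / (ℓ:ℝ) := by
    have hset : MeasurableSet {ω | B 0 ω = i₀} := hBmeas 0 (measurableSet_singleton i₀)
    have : Y 0 = Set.indicator {ω | B 0 ω = i₀} (1 : Ω → ℝ) := by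
      funext ω
      rw [hYval]
      by_cases h : B 0 ω = i₀ <;> simp [Set.indicator, h]
    rw [this, integral_indicator_one hset, measureReal_def, hBunif]
    rw [ENNReal.toReal_div]
    simp
  have hLLN : ∀ᵐ ω ∂ℙ,
      Tendsto (fun n : ℕ => (∑ k ∈ Finset.range n, Y k ω) / n) atTop (𝓝 (1 / (ℓ:ℝ))) := by
    have := strong_law_ae_real Y hint hpair hident
    rw [hEY] at this
    exact this
  -- the indicator convergence
  have hmain : ∀ᵐ ω ∂ℙ,
      ∀ᶠ n in atTop, (ω ∈ {ω | X n ω ≤ ρ ^ n} ↔ ω ∈ {ω | Xinf ω = 0}) := by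
    filter_upwards [hXinfVals, hXconv, hLLN] with ω hvals hconv hlln
    rcases hvals with hval | hval
    · -- Xinf ω = 0 : eventually X n ω ≤ ρ ^ n
      rw [hval] at hconv
      simp only [Set.mem_setOf_eq, hval, iff_true]
      set L : ℕ → ℝ := fun n => Real.log (X n ω) with hL
      have hstep : ∀ n, L (n+1) ≤ Real.log q + (d (B n ω) : ℝ) * L n := by
        intro n
        have hx := hXio n ω
        have hx0 : (0:ℝ) < X n ω := hx.1
        have hx1 := hXio (n+1) ω
        have hb : X (n+1) ω ≤ q * (X n ω) ^ (d (B n ω)) := by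
          rw [hXrec]; exact hfd _ _ _ hx
        have hpos : (0:ℝ) < q * (X n ω) ^ (d (B n ω)) := by positivity
        have : Real.log (X (n+1) ω) ≤ Real.log (q * (X n ω) ^ (d (B n ω))) :=
          (Real.log_le_log_iff hx1.1 hpos).2 hb
        rwa [Real.log_mul (ne_of_gt hq) (by positivity), Real.log_pow] at this
      -- eventually L n ≤ -s
      have hLs : ∀ᶠ n in atTop, L n ≤ -s := by
        have h1 : ∀ᶠ n in atTop, X n ω < Real.exp (-s) :=
          hconv.eventually (eventually_lt_nhds (Real.exp_pos _))
        filter_upwards [h1] with n hn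
        have := Real.log_le_log (hXio n ω).1 hn.le
        rwa [Real.log_exp] at this
      obtain ⟨m₁, hm₁⟩ := hLs.exists_forall_of_atTop
      -- eventually sums are large
      have hsum : ∀ᶠ n in atTop, (∑ k ∈ Finset.range n, Y k ω) / n > 1 / (2 * ℓ) := by
        refine hlln.eventually (eventually_gt_nhds ?_)
        rw [div_lt_div_iff₀ (by positivity) hℓR]
        nlinarith
      obtain ⟨N₁, hN₁⟩ := hsum.exists_forall_of_atTop
      set m : ℕ := max (max m₁ N₁) 1 with hm
      have hmm₁ : m₁ ≤ m := le_trans (le_max_left _ _) (le_max_left _ _)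
      have hmN₁ : N₁ ≤ m := le_trans (le_max_right _ _) (le_max_left _ _)
      have hm1 : 1 ≤ m := le_max_right _ _
      have hLm : ∀ n, m ≤ n → L n ≤ -s := fun n hn => hm₁ n (le_trans hmm₁ hn)
      -- the key inductive estimate
      have key : ∀ n, m ≤ n →
          L n ≤ L m + ((n - m : ℕ) : ℝ) * lq - s * ∑ k ∈ Finset.Ico m n, Y k ω := by
        intro n hn
        induction n, hn using Nat.le_induction with
        | base => simp
        | succ n hn ih =>
          have hdL : (d (B n ω) : ℝ) * L n ≤ L n - s * Y n ω := by
            have hLn : L n ≤ -s := hLm n hn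
            rw [hYval]
            by_cases hB : B n ω = i₀
            · rw [if_pos hB, mul_one]
              have h2 : (2:ℝ) ≤ (d (B n ω) : ℝ) := by
                exact_mod_cast le_trans hdi₀ (le_of_eq (by rw [hB]))
              nlinarith
            · rw [if_neg hB, mul_zero, sub_zero]
              have h1 : (1:ℝ) ≤ (d (B n ω) : ℝ) := by exact_mod_cast hd (B n ω)
              nlinarith
          have hlogq : Real.log q ≤ lq := le_max_left _ _
          have hsumIco : ∑ k ∈ Finset.Ico m (n+1), Y k ω
              = (∑ k ∈ Finset.Ico m n, Y k ω) + Y n ω := Finset.sum_Ico_succ_top hn _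
          have hcast : ((n + 1 - m : ℕ) : ℝ) = ((n - m : ℕ) : ℝ) + 1 := by
            rw [Nat.succ_sub hn]; push_cast; ring
          calc L (n+1) ≤ Real.log q + (d (B n ω) : ℝ) * L n := hstep n
            _ ≤ lq + (L n - s * Y n ω) := by linarith
            _ ≤ lq + (L m + ((n - m : ℕ) : ℝ) * lq - s * ∑ k ∈ Finset.Ico m n, Y k ω
                  - s * Y n ω) := by linarith
            _ = L m + ((n + 1 - m : ℕ) : ℝ) * lq - s * ∑ k ∈ Finset.Ico m (n+1), Y k ω := by
                rw [hsumIco, hcast]; ring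
      -- conclude
      have hfin : ∀ᶠ n in atTop, L n ≤ (n:ℝ) * Real.log ρ := by
        have h1 : ∀ᶠ n : ℕ in atTop, (s * m : ℝ) ≤ c * n :=
          (tendsto_natCast_atTop_atTop.const_mul_atTop hcpos).eventually_ge_atTop (s * m)
        filter_upwards [eventually_ge_atTop m, h1] with n hn hn2
        have hkey := key n hn
        have hIco : ∑ k ∈ Finset.Ico m n, Y k ω
            = (∑ k ∈ Finset.range n, Y k ω) - ∑ k ∈ Finset.range m, Y k ω :=
          Finset.sum_Ico_eq_sub _ hn
        have hub : ∑ k ∈ Finset.range m, Y k ω ≤ (m:ℝ) := by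
          calc ∑ k ∈ Finset.range m, Y k ω ≤ ∑ k ∈ Finset.range m, (1:ℝ) :=
                Finset.sum_le_sum (fun k _ => (hY01 k ω).2)
            _ = (m:ℝ) := by simp
        have hnpos : (0:ℝ) < n := by
          have : 1 ≤ n := le_trans hm1 hn
          exact_mod_cast Nat.lt_of_lt_of_le Nat.zero_lt_one this
        have hlb : (n:ℝ) / (2 * ℓ) ≤ ∑ k ∈ Finset.range n, Y k ω := by
          have := hN₁ n (le_trans hmN₁ hn)
          rw [gt_iff_lt, div_lt_div_iff₀ (by positivity) hnpos] at this
          rw [div_le_iff₀ (by positivity)]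
          nlinarith
        have hIcoLb : (n:ℝ) / (2 * ℓ) - m ≤ ∑ k ∈ Finset.Ico m n, Y k ω := by
          rw [hIco]; linarith
        have hnm : ((n - m : ℕ) : ℝ) ≤ (n : ℝ) := by
          exact_mod_cast Nat.cast_le.2 (Nat.sub_le n m)
        have hLm0 : L m ≤ 0 := le_trans (hLm m le_rfl) (by linarith)
        -- s * (n / (2ℓ)) = n * (lq + 2c)
        have hsdiv : s * ((n:ℝ) / (2 * ℓ)) = (n:ℝ) * (lq + 2 * c) := by
          rw [hs]; field_simp
        have : L n ≤ (n:ℝ) * lq - s * ((n:ℝ) / (2 * ℓ) - m) := by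
          have h2 : ((n - m : ℕ) : ℝ) * lq ≤ (n:ℝ) * lq :=
            mul_le_mul_of_nonneg_right hnm hlq0
          have h3 : s * ((n:ℝ) / (2 * ℓ) - m) ≤ s * ∑ k ∈ Finset.Ico m n, Y k ω :=
            mul_le_mul_of_nonneg_left hIcoLb hspos.le
          linarith
        have hfinal : L n ≤ -(c * n) := by
          rw [mul_sub, hsdiv] at this
          nlinarith
        have : -(c*n) = (n:ℝ) * Real.log ρ := by rw [hc]; ring
        linarith [hfinal, le_of_eq this]
      filter_upwards [hfin] with n hn
      have hxn := hXio n ω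
      have hρn : (0:ℝ) < ρ ^ n := by positivity
      rw [← Real.log_le_log_iff hxn.1 hρn, Real.log_pow]
      exact hn
    · -- Xinf ω = 1 : eventually X n ω > ρ ^ n
      rw [hval] at hconv
      have h1 : ∀ᶠ n in atTop, (1:ℝ)/2 < X n ω :=
        hconv.eventually (eventually_gt_nhds (by norm_num))
      have h2 : ∀ᶠ n : ℕ in atTop, ρ ^ n < 1/2 :=
        (tendsto_pow_atTop_nhds_zero_of_lt_one hρ0.le hρ1).eventually
          (eventually_lt_nhds (by norm_num))
      filter_upwards [h1, h2] with n hn1 hn2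
      simp only [Set.mem_setOf_eq, hval]
      constructor
      · intro h; linarith
      · intro h; norm_num at h
  -- measure convergence via indicator convergence
  have hAmble : MeasurableSet {ω | Xinf ω = 0} := by
    have : {ω | Xinf ω = 0} = Xinf ⁻¹' {0} := rfl
    rw [this]
    exact hXinfMeas (measurableSet_singleton 0)
  have hAsmble : ∀ n : ℕ, MeasurableSet {ω | X n ω ≤ ρ ^ n} :=
    fun n => measurableSet_le (hXmeas n) measurable_const
  exact tendsto_measure_of_ae_tendsto_indicator_of_isFiniteMeasure atTop hAmble hAsmble hmain
end

section
/- Suppose in addition that m ≥ 1, and let γ ∈ (0,1), Λ ≥ 0 and ε > 0 be given. If L_m ≤ −(ε·m + ζ·(n−m)) (equivalently, L_m ≤ m·log₂ρ where log₂ρ = −(ε + ζ·(n−m)/m)) and S_{m,n} ≥ γ·Λ·(n−m), then L_n ≤ −ℓ^{γ·Λ·(n−m)}·ε·m. -/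
open Finset

/-- **Lemma 3 (bootstrapping bound).**
Let `ℓ ≥ 2`, `ζ ≥ 0`, `1 ≤ m < n`, `D i ≥ 1` for `m ≤ i < n`, and let `L` satisfy the affine
recursion `L (i+1) = D i * L i + ζ` for `m ≤ i ≤ n−1`.  If `L m ≤ −(ε·m + ζ·(n−m))` and
`S_{m,n} = ∑_{i=m}^{n−1} log_ℓ (D i) ≥ γ·Λ·(n−m)`, then
`L n ≤ −ℓ^(γ·Λ·(n−m))·ε·m`. -/
theorem bootstrapping_bound
    (ℓ : ℕ) (hℓ : 2 ≤ ℓ) (ζ : ℝ) (hζ : 0 ≤ ζ)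
    (m n : ℕ) (hm : 1 ≤ m) (hmn : m < n)
    (D : ℕ → ℝ) (hD : ∀ i, m ≤ i → i < n → 1 ≤ D i)
    (L : ℕ → ℝ) (hL : ∀ i, m ≤ i → i < n → L (i + 1) = D i * L i + ζ)
    (γ Λ ε : ℝ) (hγ : γ ∈ Set.Ioo (0:ℝ) 1) (hΛ : 0 ≤ Λ) (hε : 0 < ε)
    (hLm : L m ≤ -(ε * m + ζ * ((n : ℝ) - m)))
    (hS : γ * Λ * ((n : ℝ) - m) ≤ ∑ i ∈ Finset.Ico m n, Real.logb ℓ (D i)) :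
    L n ≤ -(ℓ : ℝ) ^ (γ * Λ * ((n : ℝ) - m)) * ε * m := by
  have hℓ1 : (1:ℝ) < (ℓ:ℝ) := by exact_mod_cast Nat.lt_of_lt_of_le one_lt_two hℓ
  -- main induction claim
  have claim : ∀ k, m ≤ k → k ≤ n →
      L k ≤ -((∏ i ∈ Finset.Ico m k, D i) * ε * m + ζ * ((n:ℝ) - k)) := by
    intro k hk
    induction k, hk using Nat.le_induction with
    | base =>
      intro _
      simp only [Finset.Ico_self, Finset.prod_empty, one_mul]
      exact hLm
    | succ k hk ih =>
      intro hkn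
      have hkn' : k < n := hkn
      have ihk := ih (le_of_lt hkn')
      have hDk := hD k hk hkn'
      have hP : (1:ℝ) ≤ ∏ i ∈ Finset.Ico m k, D i := by
        calc (1:ℝ) = ∏ _i ∈ Finset.Ico m k, (1:ℝ) := by simp
          _ ≤ ∏ i ∈ Finset.Ico m k, D i :=
            Finset.prod_le_prod (fun i _ => zero_le_one) fun i hi =>
              hD i (Finset.mem_Ico.mp hi).1 (lt_of_lt_of_le (Finset.mem_Ico.mp hi).2 hkn'.le)
      rw [hL k hk hkn']
      rw [Finset.prod_Ico_succ_top hk]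
      have hnk : (1:ℝ) ≤ (n:ℝ) - k := by
        have : (k:ℝ) + 1 ≤ n := by exact_mod_cast hkn'
        linarith
      push_cast
      nlinarith [mul_le_mul_of_nonneg_left ihk (by linarith : (0:ℝ) ≤ D k),
        mul_nonneg hζ (by linarith : (0:ℝ) ≤ (n:ℝ) - k),
        mul_nonneg (mul_nonneg hζ (by linarith : (0:ℝ) ≤ (n:ℝ) - k)) (by linarith : (0:ℝ) ≤ D k - 1)]
  have hfinal := claim n hmn.le le_rfl
  simp only [sub_self, mul_zero, add_zero] at hfinal
  -- product equals ℓ^(sum of logs)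
  have hDpos : ∀ i ∈ Finset.Ico m n, (0:ℝ) < D i := fun i hi =>
    lt_of_lt_of_le one_pos (hD i (Finset.mem_Ico.mp hi).1 (Finset.mem_Ico.mp hi).2)
  have hprod : (ℓ:ℝ) ^ (∑ i ∈ Finset.Ico m n, Real.logb ℓ (D i))
      = ∏ i ∈ Finset.Ico m n, D i := by
    rw [Real.rpow_sum_of_pos (by linarith : (0:ℝ) < (ℓ:ℝ))]
    exact Finset.prod_congr rfl fun i hi =>
      Real.rpow_logb (by linarith) (by linarith) (hDpos i hi)
  have hmono : (ℓ:ℝ) ^ (γ * Λ * ((n:ℝ) - m)) ≤ ∏ i ∈ Finset.Ico m n, D i := by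
    rw [← hprod]
    exact Real.rpow_le_rpow_of_exponent_le hℓ1.le hS
  have hεm : (0:ℝ) < ε * m := mul_pos hε (by exact_mod_cast hm)
  nlinarith [hfinal, mul_le_mul_of_nonneg_right hmono hεm.le]
end

section
/- For every u₁ ∈ {0,1} and every pair x ≠ x' in {0,1}×{0,1}, the Bhattacharyya parameter of the glued split channel satisfies Z_{x,x'}(W^{(2,3)}_{u₁}) := Σ_{y∈Y⁴} √(W^{(2,3)}_{u₁}(x)(y)·W^{(2,3)}_{u₁}(x')(y)) ≤ 2·Z(W)^{D_{x,x'}(u₁)}. -/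
open Finset

lemma my_sqrt_add_le (a b : ℝ) (ha : 0 ≤ a) (hb : 0 ≤ b) :
    Real.sqrt (a + b) ≤ Real.sqrt a + Real.sqrt b := by
  rw [Real.sqrt_le_iff]
  refine ⟨by positivity, ?_⟩
  nlinarith [Real.sq_sqrt ha, Real.sq_sqrt hb, Real.sqrt_nonneg a, Real.sqrt_nonneg b]

lemma my_sqrt_sum_le {ι : Type*} [DecidableEq ι] (s : Finset ι) (f : ι → ℝ)
    (hf : ∀ i ∈ s, 0 ≤ f i) :
    Real.sqrt (∑ i ∈ s, f i) ≤ ∑ i ∈ s, Real.sqrt (f i) := by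
  induction s using Finset.induction with
  | empty => simp
  | insert _ _ h ih =>
    rename_i a s
    rw [Finset.sum_insert h, Finset.sum_insert h]
    calc Real.sqrt (f _ + ∑ i ∈ s, f i)
        ≤ Real.sqrt (f _) + Real.sqrt (∑ i ∈ s, f i) :=
          my_sqrt_add_le _ _ (hf _ (Finset.mem_insert_self _ _))
            (Finset.sum_nonneg fun i hi => hf i (Finset.mem_insert_of_mem hi))
      _ ≤ _ := by gcongr; exact ih fun i hi => hf i (Finset.mem_insert_of_mem hi)

lemma my_sqrt_prod {ι : Type*} (s : Finset ι) (f : ι → ℝ) (hf : ∀ i ∈ s, 0 ≤ f i) :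
    Real.sqrt (∏ i ∈ s, f i) = ∏ i ∈ s, Real.sqrt (f i) := by
  induction s using Finset.cons_induction with
  | empty => simp
  | cons a s h ih =>
    rw [Finset.prod_cons, Finset.prod_cons, Real.sqrt_mul (hf _ (Finset.mem_cons_self _ _)),
      ih fun i hi => hf i (Finset.mem_cons_of_mem hi)]


/-- **Upper bound on the Bhattacharyya parameter of the glued split channel**
(from the proof of Proposition 3).  For a binary-input DMC `W` with Bhattacharyya parameter
`Z(W) = ∑ y, √(W 0 y · W 1 y)`, an arbitrary kernel map `g`, and the glued split channel
`W^{(2,3)}_{u₁}(x)(y) = (1/2) ∑_{u₄} W⁴(g(u₁,x,u₄))(y)`, for every `u₁` and every `x ≠ x'`: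
`Z_{x,x'}(W^{(2,3)}_{u₁}) ≤ 2 · Z(W)^{D_{x,x'}(u₁)}`, where
`D_{x,x'}(u₁) = min_{u₄,v₄} d_H(g(u₁,x,u₄), g(u₁,x',v₄))`. -/
theorem glued_split_channel_bhattacharyya_upper
    {Y : Type*} [Fintype Y] [Nonempty Y]
    (W : Bool → Y → ℝ) (hWnn : ∀ b y, 0 ≤ W b y)
    (hWsum : ∀ b, ∑ y, W b y = 1)
    (g : Bool → Bool × Bool → Bool → (Fin 4 → Bool)) :
    ∀ (u₁ : Bool) (x x' : Bool × Bool), x ≠ x' →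
      ∑ y : Fin 4 → Y,
          Real.sqrt ((((1 : ℝ) / 2) * ∑ u₄ : Bool, ∏ i, W (g u₁ x u₄ i) (y i)) *
            (((1 : ℝ) / 2) * ∑ v₄ : Bool, ∏ i, W (g u₁ x' v₄ i) (y i)))
        ≤ 2 * (∑ y, Real.sqrt (W false y * W true y)) ^
            (Finset.univ.inf' Finset.univ_nonempty
              (fun p : Bool × Bool => hammingDist (g u₁ x p.1) (g u₁ x' p.2))) := by
  intro u₁ x x' _
  set Z : ℝ := ∑ y, Real.sqrt (W false y * W true y) with hZdef
  have hZ0 : 0 ≤ Z := Finset.sum_nonneg fun y _ => Real.sqrt_nonneg _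
  have hZ1 : Z ≤ 1 := by
    have h := Finset.sum_mul_sq_le_sq_mul_sq Finset.univ
      (fun y => Real.sqrt (W false y)) (fun y => Real.sqrt (W true y))
    have e1 : ∀ y : Y, Real.sqrt (W false y) * Real.sqrt (W true y)
        = Real.sqrt (W false y * W true y) := fun y =>
      (Real.sqrt_mul (hWnn false y) _).symm
    simp only [e1, Real.sq_sqrt (hWnn false _), Real.sq_sqrt (hWnn true _),
      hWsum, mul_one] at h
    nlinarith
  -- factor each Bhattacharyya factor: Z for differing bits, 1 for equal bits
  have hfac : ∀ b b' : Bool, (∑ t : Y, Real.sqrt (W b t * W b' t))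
      = if b = b' then 1 else Z := by
    intro b b'
    cases b <;> cases b' <;> simp only [if_true, if_false, Bool.false_eq_true,
      Bool.true_eq_false, reduceIte]
    · simp [Real.sqrt_mul_self (hWnn false _), hWsum]
    · rw [hZdef]
    · rw [hZdef]; exact Finset.sum_congr rfl fun t _ => by rw [mul_comm]
    · simp [Real.sqrt_mul_self (hWnn true _), hWsum]
  -- key: ∑_y ∏_i √(W (b i) (y i) * W (b' i) (y i)) = Z ^ hammingDist b b'
  have hkey : ∀ b b' : Fin 4 → Bool,
      (∑ y : Fin 4 → Y, ∏ i, Real.sqrt (W (b i) (y i) * W (b' i) (y i)))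
        = Z ^ hammingDist b b' := by
    intro b b'
    rw [← Fintype.prod_sum (fun i (t : Y) => Real.sqrt (W (b i) t * W (b' i) t))]
    have : ∀ i : Fin 4, (∑ t : Y, Real.sqrt (W (b i) t * W (b' i) t))
        = if b i = b' i then 1 else Z := fun i => hfac (b i) (b' i)
    simp only [this]
    rw [Finset.prod_ite, Finset.prod_const, Finset.prod_const, one_pow, one_mul]
    simp [hammingDist]
  set D : ℕ := Finset.univ.inf' Finset.univ_nonempty
      (fun p : Bool × Bool => hammingDist (g u₁ x p.1) (g u₁ x' p.2)) with hDdef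
  have hstep : ∀ y : Fin 4 → Y,
      Real.sqrt ((((1 : ℝ) / 2) * ∑ u₄ : Bool, ∏ i, W (g u₁ x u₄ i) (y i)) *
        (((1 : ℝ) / 2) * ∑ v₄ : Bool, ∏ i, W (g u₁ x' v₄ i) (y i)))
      ≤ ((1 : ℝ) / 2) * ∑ p : Bool × Bool,
          ∏ i, Real.sqrt (W (g u₁ x p.1 i) (y i) * W (g u₁ x' p.2 i) (y i)) := by
    intro y
    have hrw : (((1 : ℝ) / 2) * ∑ u₄ : Bool, ∏ i, W (g u₁ x u₄ i) (y i)) *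
        (((1 : ℝ) / 2) * ∑ v₄ : Bool, ∏ i, W (g u₁ x' v₄ i) (y i))
        = (((1 : ℝ) / 2) ^ 2) * ∑ p : Bool × Bool,
            (∏ i, W (g u₁ x p.1 i) (y i)) * ∏ i, W (g u₁ x' p.2 i) (y i) := by
      rw [Fintype.sum_prod_type]
      simp only [Fintype.sum_bool]
      ring
    rw [hrw, Real.sqrt_mul (by norm_num : (0:ℝ) ≤ (1/2)^2), Real.sqrt_sq (by norm_num : (0:ℝ) ≤ 1/2)]
    gcongr
    calc Real.sqrt (∑ p : Bool × Bool,
            (∏ i, W (g u₁ x p.1 i) (y i)) * ∏ i, W (g u₁ x' p.2 i) (y i))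
        ≤ ∑ p : Bool × Bool, Real.sqrt
            ((∏ i, W (g u₁ x p.1 i) (y i)) * ∏ i, W (g u₁ x' p.2 i) (y i)) :=
          my_sqrt_sum_le _ _ fun p _ => mul_nonneg
            (Finset.prod_nonneg fun i _ => hWnn _ _) (Finset.prod_nonneg fun i _ => hWnn _ _)
      _ = _ := by
          refine Finset.sum_congr rfl fun p _ => ?_
          rw [← Finset.prod_mul_distrib,
            my_sqrt_prod _ _ fun i _ => mul_nonneg (hWnn _ _) (hWnn _ _)]
  calc ∑ y : Fin 4 → Y,
        Real.sqrt ((((1 : ℝ) / 2) * ∑ u₄ : Bool, ∏ i, W (g u₁ x u₄ i) (y i)) *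
          (((1 : ℝ) / 2) * ∑ v₄ : Bool, ∏ i, W (g u₁ x' v₄ i) (y i)))
      ≤ ∑ y : Fin 4 → Y, ((1 : ℝ) / 2) * ∑ p : Bool × Bool,
          ∏ i, Real.sqrt (W (g u₁ x p.1 i) (y i) * W (g u₁ x' p.2 i) (y i)) :=
        Finset.sum_le_sum fun y _ => hstep y
    _ = ((1 : ℝ) / 2) * ∑ p : Bool × Bool, ∑ y : Fin 4 → Y,
          ∏ i, Real.sqrt (W (g u₁ x p.1 i) (y i) * W (g u₁ x' p.2 i) (y i)) := by
        rw [← Finset.mul_sum, Finset.sum_comm]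
    _ = ((1 : ℝ) / 2) * ∑ p : Bool × Bool,
          Z ^ hammingDist (g u₁ x p.1) (g u₁ x' p.2) := by
        rw [Finset.sum_congr rfl fun p _ => hkey (g u₁ x p.1) (g u₁ x' p.2)]
    _ ≤ ((1 : ℝ) / 2) * ∑ _p : Bool × Bool, Z ^ D := by
        refine mul_le_mul_of_nonneg_left (Finset.sum_le_sum fun p _ => ?_) (by norm_num)
        exact pow_le_pow_of_le_one hZ0 hZ1 (Finset.inf'_le _ (Finset.mem_univ p))
    _ = 2 * Z ^ D := by
        rw [Finset.sum_const]
        simp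
        ring
end

section
/- Define the process Z̃₀ = z₀ and Z̃_{n+1} = c·(Z̃_n)^{D̆_n} for n ≥ 0. Then for every real β > E, lim_{n→∞} P( Z̃_n ≥ 2^{−ℓ^{βn}} ) = 1. -/
open MeasureTheory ProbabilityTheory Filter Topology

open Finset
/-- eventual comparison: linear below exponential -/
lemma aux_lin_le_exp (a b C : ℝ) (ha : 0 < a) :
    ∀ᶠ n : ℕ in atTop, b * n + C ≤ Real.exp (a * n) := by
  have h1 : Tendsto (fun x : ℝ => Real.exp x / x) atTop atTop := by
    simpa using Real.tendsto_exp_div_pow_atTop 1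
  have h2 : Tendsto (fun x : ℝ => a * x) atTop atTop :=
    Tendsto.const_mul_atTop ha tendsto_id
  have h3 : Tendsto (fun n : ℕ => Real.exp (a * n) / (a * n)) atTop atTop :=
    (h1.comp h2).comp tendsto_natCast_atTop_atTop
  have h5 := h3.eventually_ge_atTop ((|b| + |C| + 1) / a)
  filter_upwards [h5, eventually_ge_atTop 1] with n hn hn1
  have hn1' : (1 : ℝ) ≤ n := by exact_mod_cast hn1
  have han : 0 < a * n := by positivity
  rw [le_div_iff₀ han] at hn
  have heq : (|b| + |C| + 1) / a * (a * n) = (|b| + |C| + 1) * n := by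
    field_simp
  rw [heq] at hn
  have hb := le_abs_self b
  have hC := le_abs_self C
  have hb0 := abs_nonneg b
  nlinarith [mul_nonneg (sub_nonneg.2 hb) (le_trans zero_le_one hn1'), mul_nonneg (abs_nonneg C) (sub_nonneg.2 hn1')]
open MeasureTheory ProbabilityTheory Filter Topology Finset

lemma aux_tendsto_measure {Ω : Type*} [MeasureSpace Ω] [IsProbabilityMeasure (ℙ : Measure Ω)]
    (A : ℕ → Set Ω) (hA : ∀ n, MeasurableSet (A n))
    (h : ∀ᵐ ω, ∀ᶠ n in atTop, ω ∈ A n) :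
    Tendsto (fun n => ℙ (A n)) atTop (𝓝 1) := by
  set B : ℕ → Set Ω := fun N => ⋂ m, ⋂ (_ : N ≤ m), A m with hB
  have hBmeas : ∀ N, MeasurableSet (B N) := fun N =>
    MeasurableSet.iInter fun m => MeasurableSet.iInter fun _ => hA m
  have hBmono : Monotone B := fun N N' hNN' =>
    Set.iInter₂_mono' fun m hm => ⟨m, le_trans hNN' hm, le_refl _⟩
  have hUnion : ℙ (⋃ N, B N) = 1 := by
    rw [← prob_compl_eq_zero_iff (MeasurableSet.iUnion hBmeas)]
    have : ∀ᵐ ω, ω ∈ ⋃ N, B N := by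
      filter_upwards [h] with ω hω
      rw [eventually_atTop] at hω
      obtain ⟨N, hN⟩ := hω
      exact Set.mem_iUnion.2 ⟨N, Set.mem_iInter₂.2 hN⟩
    rw [ae_iff] at this
    simpa [Set.compl_def] using this
  have h1 : Tendsto (fun N => ℙ (B N)) atTop (𝓝 1) := by
    have := tendsto_measure_iUnion_atTop (μ := ℙ) hBmono
    rwa [hUnion] at this
  refine tendsto_of_tendsto_of_tendsto_of_le_of_le h1 tendsto_const_nhds
    (fun n => measure_mono ?_) (fun n => prob_le_one)
  exact Set.iInter₂_subset n (le_refl n)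

/-- Deterministic per-path estimate. -/
lemma aux_perPath (ℓ : ℕ) (hℓ : 2 ≤ ℓ) (c z₀ : ℝ)
    (hc : c ∈ Set.Ioo (0:ℝ) 1) (hz₀ : z₀ ∈ Set.Ioo (0:ℝ) 1)
    (mS : ℕ) (hmS : 1 ≤ mS)
    (d e : ℕ → ℕ) (hd1 : ∀ n, 1 ≤ d n) (hdM : ∀ n, d n ≤ mS)
    (he1 : ∀ n, 1 ≤ e n)
    (t : ℕ) (hde : ∀ n, t < n → d n = e n)
    (Z : ℕ → ℝ) (hZ0 : Z 0 = z₀) (hZrec : ∀ n, Z (n + 1) = c * Z n ^ d n)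
    (β E : ℝ) (hβ : E < β)
    (hlim : Tendsto (fun n : ℕ => (∑ k ∈ range n, Real.logb ℓ (e k)) / n) atTop (𝓝 E)) :
    ∀ᶠ n : ℕ in atTop, (2 : ℝ) ^ (-(ℓ : ℝ) ^ (β * n)) ≤ Z n := by
  have hℓ1 : (1 : ℝ) < (ℓ : ℝ) := by exact_mod_cast lt_of_lt_of_le one_lt_two hℓ
  have hℓ0 : (0 : ℝ) < (ℓ : ℝ) := lt_trans zero_lt_one hℓ1
  set K : ℝ := -Real.log c with hK
  set L : ℝ := -Real.log z₀ with hL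
  have hK0 : 0 < K := by
    have := Real.log_neg hc.1 hc.2; linarith
  have hL0 : 0 < L := by
    have := Real.log_neg hz₀.1 hz₀.2; linarith
  set P : ℕ → ℝ := fun n => ∏ k ∈ range n, (d k : ℝ) with hP
  have hP1 : ∀ n, 1 ≤ P n := by
    intro n
    show (1:ℝ) ≤ ∏ k ∈ range n, (d k : ℝ)
    calc (1:ℝ) = ∏ _k ∈ range n, (1:ℝ) := by simp
      _ ≤ ∏ k ∈ range n, (d k : ℝ) :=
        Finset.prod_le_prod (fun i _ => zero_le_one)
          (fun i _ => by exact_mod_cast hd1 i)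
  have hZpos : ∀ n, 0 < Z n := by
    intro n
    induction n with
    | zero => rw [hZ0]; exact hz₀.1
    | succ n ih => rw [hZrec]; exact mul_pos hc.1 (pow_pos ih _)
  -- main recursion bound
  have hlog : ∀ n, -Real.log (Z n) ≤ ((n : ℝ) * K + L) * P n := by
    intro n
    induction n with
    | zero => simp [hZ0, hP, hL]
    | succ n ih =>
      have hdn : (1 : ℝ) ≤ (d n : ℝ) := by exact_mod_cast hd1 n
      have hlogZ : Real.log (Z (n + 1)) = Real.log c + (d n : ℝ) * Real.log (Z n) := by
        rw [hZrec, Real.log_mul hc.1.ne' (pow_ne_zero _ (hZpos n).ne'), Real.log_pow]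
      have hPsucc : P (n + 1) = P n * (d n : ℝ) := by
        rw [hP]; exact Finset.prod_range_succ _ _
      have key : (d n : ℝ) * (-Real.log (Z n)) ≤ (d n : ℝ) * (((n : ℝ) * K + L) * P n) :=
        mul_le_mul_of_nonneg_left ih (by linarith)
      have hdP : 1 ≤ (d n : ℝ) * P n :=
        le_trans hdn (le_mul_of_one_le_right (by linarith) (hP1 n))
      rw [hlogZ, hPsucc]
      push_cast
      nlinarith [hP1 n]
  -- product bounded by rpow of shifted sum
  set M : ℝ := Real.logb ℓ mS with hM
  have hM0 : 0 ≤ M := Real.logb_nonneg hℓ1 (by exact_mod_cast hmS)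
  have hProd_eq : ∀ n, P n = (ℓ : ℝ) ^ (∑ k ∈ range n, Real.logb ℓ (d k)) := by
    intro n
    induction n with
    | zero => simp [hP]
    | succ n ih =>
      have h1 : P (n + 1) = P n * (d n : ℝ) := by rw [hP]; exact Finset.prod_range_succ _ _
      rw [h1, ih, Finset.sum_range_succ, Real.rpow_add hℓ0,
        Real.rpow_logb hℓ0 (by linarith) (by exact_mod_cast Nat.lt_of_lt_of_le Nat.zero_lt_one (hd1 n))]
  have hsum_le : ∀ n, (∑ k ∈ range n, Real.logb ℓ (d k)) ≤
      (∑ k ∈ range n, Real.logb ℓ (e k)) + ((t : ℝ) + 1) * M := by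
    intro n
    have h1 : ∀ k ∈ range n, Real.logb ℓ (d k) - Real.logb ℓ (e k) ≤
        (if k ≤ t then M else 0) := by
      intro k _
      by_cases hk : k ≤ t
      · simp only [hk, if_true]
        have h2 : Real.logb ℓ (d k) ≤ M := by
          apply Real.logb_le_logb_of_le hℓ1 (by exact_mod_cast hd1 k)
          exact_mod_cast hdM k
        have h3 : 0 ≤ Real.logb ℓ (e k) := Real.logb_nonneg hℓ1 (by exact_mod_cast he1 k)
        linarith
      · simp only [hk, if_false]
        rw [hde k (not_le.1 hk)]
        simp
    have h2 : ∑ k ∈ range n, (Real.logb ℓ (d k) - Real.logb ℓ (e k)) ≤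
        ∑ k ∈ range n, (if k ≤ t then M else 0) :=
      Finset.sum_le_sum h1
    have h3 : ∑ k ∈ range n, (if k ≤ t then M else 0) ≤ ((t : ℝ) + 1) * M := by
      rw [← Finset.sum_filter]
      rw [Finset.sum_const, nsmul_eq_mul]
      have hcard : ((range n).filter (· ≤ t)).card ≤ t + 1 := by
        have hsub : (range n).filter (· ≤ t) ⊆ range (t + 1) := by
          intro x hx
          simp only [Finset.mem_filter, Finset.mem_range] at hx ⊢
          omega
        simpa using Finset.card_le_card hsub
      have : (((range n).filter (· ≤ t)).card : ℝ) ≤ (t : ℝ) + 1 := by exact_mod_cast hcard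
      exact mul_le_mul_of_nonneg_right this hM0
    rw [Finset.sum_sub_distrib] at h2
    linarith
  -- epsilon
  set ε : ℝ := (β - E) / 2 with hε
  have hε0 : 0 < ε := by simp only [hε]; linarith
  have hEV1 : ∀ᶠ n : ℕ in atTop, (∑ k ∈ range n, Real.logb ℓ (e k)) / n ≤ E + ε :=
    hlim.eventually_le_const (by linarith)
  -- linear vs exponential
  have hlog2 : (0 : ℝ) < Real.log 2 := Real.log_pos one_lt_two
  set Q : ℝ := (ℓ : ℝ) ^ (((t : ℝ) + 1) * M) with hQ
  have hQ0 : 0 < Q := Real.rpow_pos_of_pos hℓ0 _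
  have ha0 : 0 < ε * Real.log ℓ := mul_pos hε0 (Real.log_pos hℓ1)
  have hEV2 := aux_lin_le_exp (ε * Real.log ℓ) (K * Q / Real.log 2) (L * Q / Real.log 2) ha0
  filter_upwards [hEV1, hEV2, eventually_ge_atTop 1] with n h1 h2 h3
  have hn1 : (1 : ℝ) ≤ (n : ℝ) := by exact_mod_cast h3
  have hn0 : (0 : ℝ) < (n : ℝ) := by linarith
  -- sum bound
  have hS2 : (∑ k ∈ range n, Real.logb ℓ (e k)) ≤ (E + ε) * n := by
    rw [div_le_iff₀ hn0] at h1; linarith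
  -- exp form of h2
  have hexp : ((n : ℝ) * K + L) * Q ≤ Real.log 2 * (ℓ : ℝ) ^ (ε * n) := by
    have hrw : (ℓ : ℝ) ^ (ε * (n : ℝ)) = Real.exp (ε * Real.log ℓ * n) := by
      rw [Real.rpow_def_of_pos hℓ0]; ring_nf
    rw [hrw]
    have h4 : K * Q / Real.log 2 * n + L * Q / Real.log 2 ≤ Real.exp (ε * Real.log ℓ * n) := h2
    calc ((n : ℝ) * K + L) * Q
        = (K * Q / Real.log 2 * n + L * Q / Real.log 2) * Real.log 2 := by
          field_simp
      _ ≤ Real.exp (ε * Real.log ℓ * n) * Real.log 2 :=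
          mul_le_mul_of_nonneg_right h4 hlog2.le
      _ = Real.log 2 * Real.exp (ε * Real.log ℓ * n) := mul_comm _ _
  -- put it together
  have hPn : P n ≤ (ℓ : ℝ) ^ ((E + ε) * n + ((t : ℝ) + 1) * M) := by
    rw [hProd_eq n]
    apply Real.rpow_le_rpow_of_exponent_le hℓ1.le
    have := hsum_le n
    linarith
  have hfinal : -Real.log (Z n) ≤ (ℓ : ℝ) ^ (β * n) * Real.log 2 := by
    have hb1 : -Real.log (Z n) ≤ ((n : ℝ) * K + L) * P n := hlog n
    have hnKL : 0 ≤ (n : ℝ) * K + L := by positivity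
    have hb2 : ((n : ℝ) * K + L) * P n ≤ ((n : ℝ) * K + L) * ((ℓ : ℝ) ^ ((E + ε) * n) * Q) := by
      apply mul_le_mul_of_nonneg_left _ hnKL
      rw [hQ, ← Real.rpow_add hℓ0]
      exact hPn
    have hb3 : ((n : ℝ) * K + L) * ((ℓ : ℝ) ^ ((E + ε) * n) * Q) ≤
        Real.log 2 * (ℓ : ℝ) ^ (ε * n) * (ℓ : ℝ) ^ ((E + ε) * n) := by
      have hpow0 : (0 : ℝ) ≤ (ℓ : ℝ) ^ ((E + ε) * n) := (Real.rpow_pos_of_pos hℓ0 _).le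
      calc ((n : ℝ) * K + L) * ((ℓ : ℝ) ^ ((E + ε) * n) * Q)
          = (((n : ℝ) * K + L) * Q) * (ℓ : ℝ) ^ ((E + ε) * n) := by ring
        _ ≤ (Real.log 2 * (ℓ : ℝ) ^ (ε * n)) * (ℓ : ℝ) ^ ((E + ε) * n) :=
            mul_le_mul_of_nonneg_right hexp hpow0
    have hb4 : Real.log 2 * (ℓ : ℝ) ^ (ε * n) * (ℓ : ℝ) ^ ((E + ε) * n) =
        (ℓ : ℝ) ^ (β * n) * Real.log 2 := by
      rw [mul_assoc, ← Real.rpow_add hℓ0]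
      have : ε * n + (E + ε) * n = β * n := by rw [hε]; ring
      rw [this]; ring
    linarith
  -- conclude
  have h2pos : (0:ℝ) < 2 := zero_lt_two
  rw [Real.rpow_def_of_pos h2pos, ← Real.exp_log (hZpos n)]
  apply Real.exp_le_exp.2
  have : Real.log 2 * -(ℓ:ℝ) ^ (β * n) = -((ℓ:ℝ) ^ (β * n) * Real.log 2) := by ring
  rw [this]
  linarith

/-- **Equation (exponentEx2) of Proposition 4 (abstracted core): converse bound on the rate
of polarization.**  Fix `ℓ ≥ 2`, `c, z₀ ∈ (0,1)`.  Let `D1, D2` be i.i.d. integer-valued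
sequences with values in a fixed finite set of integers `≥ 1`, and `T` an `ℕ`-valued random
variable independent of `(D2 n)`.  Splice `D n = D1 n` for `n ≤ T`, `D n = D2 n` for `n > T`,
and define `Z 0 = z₀`, `Z (n+1) = c · (Z n)^(D n)`.  Then for every `β > E = E[log_ℓ (D2 0)]`,
`P(Z n ≥ 2^(−ℓ^(βn))) → 1`. -/
theorem spliced_process_converse_rate
    {Ω : Type*} [MeasureSpace Ω] [IsProbabilityMeasure (ℙ : Measure Ω)]
    (ℓ : ℕ) (hℓ : 2 ≤ ℓ) (c z₀ : ℝ)
    (hc : c ∈ Set.Ioo (0:ℝ) 1) (hz₀ : z₀ ∈ Set.Ioo (0:ℝ) 1)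
    (D1 D2 : ℕ → Ω → ℕ)
    (hD1meas : ∀ n, Measurable (D1 n)) (hD2meas : ∀ n, Measurable (D2 n))
    (S : Finset ℕ) (hS1 : ∀ k ∈ S, 1 ≤ k)
    (hD1S : ∀ n ω, D1 n ω ∈ S) (hD2S : ∀ n ω, D2 n ω ∈ S)
    (hD1indep : iIndepFun D1 ℙ)
    (hD2indep : iIndepFun D2 ℙ)
    (hD1id : ∀ n, IdentDistrib (D1 n) (D1 0) ℙ ℙ)
    (hD2id : ∀ n, IdentDistrib (D2 n) (D2 0) ℙ ℙ)
    (T : Ω → ℕ) (hTmeas : Measurable T)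
    (hTindep : Indep (MeasurableSpace.comap T inferInstance)
      (⨆ n, MeasurableSpace.comap (D2 n) inferInstance) ℙ)
    (Z : ℕ → Ω → ℝ) (hZ0 : ∀ ω, Z 0 ω = z₀)
    (hZrec : ∀ n ω, Z (n + 1) ω = c * Z n ω ^ (if n ≤ T ω then D1 n ω else D2 n ω)) :
    ∀ β : ℝ, (∫ ω, Real.logb ℓ (D2 0 ω) ∂ℙ) < β →
      Tendsto (fun n : ℕ => ℙ {ω | (2 : ℝ) ^ (-(ℓ : ℝ) ^ (β * n)) ≤ Z n ω})
        atTop (𝓝 1) := by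
  intro β hβ
  have hℓ1 : (1 : ℝ) < (ℓ : ℝ) := by exact_mod_cast lt_of_lt_of_le one_lt_two hℓ
  have hne : Nonempty Ω := by
    by_contra h
    rw [not_nonempty_iff] at h
    have h1 : (ℙ : Measure Ω) Set.univ = 1 := measure_univ
    rw [Set.univ_eq_empty_iff.2 h] at h1
    simp at h1
  obtain ⟨ω₀⟩ := hne
  have hSne : S.Nonempty := ⟨D1 0 ω₀, hD1S 0 ω₀⟩
  have hmS1 : 1 ≤ S.max' hSne := hS1 _ (S.max'_mem hSne)
  -- measurability of Z
  have hZmeas : ∀ n, Measurable (Z n) := by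
    intro n
    induction n with
    | zero =>
      have h0 : Z 0 = fun _ => z₀ := funext hZ0
      rw [h0]; exact measurable_const
    | succ n ih =>
      have h0 : Z (n + 1) = fun ω => c * Z n ω ^ (if n ≤ T ω then D1 n ω else D2 n ω) :=
        funext (hZrec n)
      rw [h0]
      exact (ih.pow (Measurable.ite (hTmeas measurableSet_Ici)
        (hD1meas n) (hD2meas n))).const_mul c
  -- SLLN for the second sequence
  have hφ : Measurable (fun k : ℕ => Real.logb ℓ (k : ℝ)) := measurable_from_top
  have hint : Integrable (fun ω => Real.logb ℓ (D2 0 ω)) ℙ := by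
    apply (integrable_const (Real.logb ℓ (S.max' hSne))).mono'
      ((hφ.comp (hD2meas 0)).aestronglyMeasurable)
    filter_upwards with ω
    show ‖Real.logb ℓ (D2 0 ω)‖ ≤ Real.logb ℓ (S.max' hSne)
    rw [Real.norm_eq_abs, abs_of_nonneg
      (Real.logb_nonneg hℓ1 (by exact_mod_cast hS1 _ (hD2S 0 ω)))]
    exact Real.logb_le_logb_of_le hℓ1
      (by exact_mod_cast hS1 _ (hD2S 0 ω))
      (by exact_mod_cast S.le_max' _ (hD2S 0 ω))
  have hindep : Pairwise (Function.onFun (IndepFun · · ℙ) (fun i ω => Real.logb ℓ (D2 i ω))) :=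
    fun i j hij => (hD2indep.indepFun hij).comp hφ hφ
  have hident : ∀ i, IdentDistrib (fun ω => Real.logb ℓ (D2 i ω))
      (fun ω => Real.logb ℓ (D2 0 ω)) ℙ ℙ :=
    fun i => (hD2id i).comp hφ
  have hslln := strong_law_ae_real (fun i ω => Real.logb ℓ (D2 i ω)) hint hindep hident
  apply aux_tendsto_measure
  · intro n; exact measurableSet_le measurable_const (hZmeas n)
  · filter_upwards [hslln] with ω hω
    exact aux_perPath ℓ hℓ c z₀ hc hz₀ (S.max' hSne) hmS1
      (fun n => if n ≤ T ω then D1 n ω else D2 n ω) (fun n => D2 n ω)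
      (fun n => by split <;> exact hS1 _ (by first | exact hD1S n ω | exact hD2S n ω))
      (fun n => by split <;> exact S.le_max' _ (by first | exact hD1S n ω | exact hD2S n ω))
      (fun n => hS1 _ (hD2S n ω))
      (T ω) (fun n hn => by simp [Nat.not_le.2 hn])
      (fun n => Z n ω) (hZ0 ω) (fun n => hZrec n ω)
      β _ hβ hω
end

section
/- Under the stated assumptions, for every real β with 0 ≤ β < E₁, lim_{n→∞} P( X_n ≤ 2^{−ℓ^{βn}} ) = P(X_∞ = 0). -/
open MeasureTheory ProbabilityTheory Filter Topology

lemma log_one_sub_ge {x : ℝ} (h0 : 0 ≤ x) (h2 : x ≤ 1/2) : -(2*x) ≤ Real.log (1 - x) := by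
  have hx1 : 0 < 1 - x := by linarith
  rw [Real.le_log_iff_exp_le hx1]
  have h1 : (1:ℝ) + 2*x ≤ Real.exp (2*x) := by
    have := Real.add_one_le_exp (2*x); linarith
  have hpos : (0:ℝ) < 1 + 2*x := by linarith
  have h2' : Real.exp (-(2*x)) ≤ (1 + 2*x)⁻¹ := by
    rw [Real.exp_neg]
    exact inv_anti₀ hpos h1
  have h3 : (1 + 2*x)⁻¹ ≤ 1 - x := by
    rw [inv_le_iff_one_le_mul₀ hpos]
    nlinarith
  linarith

lemma core_polar (L : ℝ) (hL : 2 ≤ L) (c : ℝ) (hc : 0 ≤ c) (β E₁ : ℝ) (hβ : 0 ≤ β) (hβE : β < E₁)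
    (a : ℕ → ℝ) (ha : ∀ n, 0 < a n) (hatop : Tendsto a atTop atTop)
    (d : ℕ → ℕ) (hd : ∀ n, 1 ≤ d n) (t : ℕ)
    (hrec : ∀ n, t < n → (d n : ℝ) * a n - c ≤ a (n+1))
    (hS : Tendsto (fun n : ℕ => (∑ k ∈ Finset.range n, Real.logb L (d k)) / n) atTop (𝓝 E₁)) :
    ∀ᶠ n : ℕ in atTop, L ^ (β * (n:ℝ)) * Real.log 2 ≤ a n := by
  have hL1 : (1:ℝ) < L := by linarith
  have hL0 : (0:ℝ) < L := by linarith
  have hlogL : 0 < Real.log L := Real.log_pos hL1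
  set ε := (E₁ - β)/3 with hεdef
  have hε : 0 < ε := by rw [hεdef]; linarith
  set S : ℕ → ℝ := fun n => ∑ k ∈ Finset.range n, Real.logb L (d k) with hSdef
  set A : ℝ := max 1 (max (2*c) (2*c/(ε * Real.log L))) with hA
  obtain ⟨m₁, hm₁⟩ : ∃ m₁, ∀ n ≥ m₁, A ≤ a n :=
    eventually_atTop.mp ((tendsto_atTop.mp hatop) A)
  obtain ⟨N₀, hN₀⟩ : ∃ N₀, ∀ n ≥ N₀, β + 2*ε ≤ S n / n := by
    have h : ∀ᶠ n : ℕ in atTop, S n / (n:ℝ) > E₁ - ε :=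
      hS.eventually (eventually_gt_nhds (by linarith))
    obtain ⟨N₀, hN₀⟩ := eventually_atTop.mp h
    refine ⟨N₀, fun n hn => ?_⟩
    have h1 := hN₀ n hn
    have h2 : E₁ - ε = β + 2*ε := by rw [hεdef]; ring
    linarith
  set m := max (max m₁ N₀) (t+1) with hm
  have hmm₁ : m₁ ≤ m := le_trans (le_max_left _ _) (le_max_left _ _)
  have hmN₀ : N₀ ≤ m := le_trans (le_max_right _ _) (le_max_left _ _)
  have hmt : t + 1 ≤ m := le_max_right _ _
  have step : ∀ n, m ≤ n →
      Real.log (a n) + Real.log (d n) - ε * Real.log L ≤ Real.log (a (n+1)) := by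
    intro n hn
    have hAa : A ≤ a n := hm₁ n (le_trans hmm₁ hn)
    have ha1 : (1:ℝ) ≤ a n := le_trans (le_max_left _ _) hAa
    have h2c : 2*c ≤ a n := le_trans (le_trans (le_max_left _ _) (le_max_right _ _)) hAa
    have h2c' : 2*c/(ε * Real.log L) ≤ a n :=
      le_trans (le_trans (le_max_right _ _) (le_max_right _ _)) hAa
    have hx0 : 0 ≤ c / a n := div_nonneg hc (ha n).le
    have hx2 : c / a n ≤ 1/2 := by rw [div_le_iff₀ (ha n)]; linarith
    have hd1 : (1:ℝ) ≤ (d n : ℝ) := by exact_mod_cast hd n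
    have key : (d n : ℝ) * a n * (1 - c / a n) ≤ a (n+1) := by
      have heq : (d n : ℝ) * a n * (1 - c / a n) = (d n : ℝ) * a n - (d n : ℝ) * c := by
        field_simp
      rw [heq]
      have := hrec n (by omega)
      nlinarith
    have h1x : (0:ℝ) < 1 - c / a n := by linarith
    have hpos : 0 < (d n : ℝ) * a n * (1 - c/a n) := by positivity
    have hlog1 : Real.log ((d n : ℝ) * a n * (1 - c/a n))
        = Real.log (d n) + Real.log (a n) + Real.log (1 - c/a n) := by
      rw [Real.log_mul (by positivity) (ne_of_gt h1x), Real.log_mul (by positivity) (by positivity)]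
    have hlog2 : -(2*(c/a n)) ≤ Real.log (1 - c/a n) := log_one_sub_ge hx0 hx2
    have hsmall : 2*(c/a n) ≤ ε * Real.log L := by
      rw [div_le_iff₀ (by positivity)] at h2c'
      rw [mul_div_assoc', div_le_iff₀ (ha n)]
      linarith
    have hmono : Real.log ((d n : ℝ) * a n * (1 - c/a n)) ≤ Real.log (a (n+1)) :=
      Real.log_le_log hpos key
    linarith [hlog1 ▸ hmono]
  have ind : ∀ k : ℕ,
      Real.log (a m) + (S (m+k) - S m) * Real.log L - k * (ε * Real.log L)
        ≤ Real.log (a (m+k)) := by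
    intro k
    induction k with
    | zero => simp
    | succ k ih =>
      have hstep := step (m+k) (Nat.le_add_right m k)
      have hSdiff : S (m+k+1) = S (m+k) + Real.logb L (d (m+k)) := by
        simp [hSdef, Finset.sum_range_succ]
      have hlogb : Real.logb L (d (m+k)) * Real.log L = Real.log (d (m+k)) := by
        rw [Real.logb]; field_simp
      have hcast : ((k+1 : ℕ) : ℝ) = (k:ℝ) + 1 := by push_cast; ring
      have hnat : m + (k+1) = (m+k) + 1 := rfl
      rw [hnat, hcast]
      nlinarith [ih, hstep, hSdiff, hlogb]
  have hfin : ∀ n, m ≤ n → (S m / ε) ≤ (n:ℝ) → L ^ (β * (n:ℝ)) * Real.log 2 ≤ a n := by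
    intro n hn hn2
    obtain ⟨k, rfl⟩ := Nat.exists_eq_add_of_le hn
    have h1 := ind k
    have hn1 : (1:ℝ) ≤ ((m+k : ℕ):ℝ) := by
      have : 1 ≤ m + k := by omega
      exact_mod_cast this
    have hSn : (β + 2*ε) * ((m+k:ℕ):ℝ) ≤ S (m+k) := by
      have := hN₀ (m+k) (le_trans hmN₀ (Nat.le_add_right m k))
      rw [le_div_iff₀ (by linarith)] at this
      linarith
    have hlogam : 0 ≤ Real.log (a m) :=
      Real.log_nonneg (le_trans (le_max_left _ _) (hm₁ m hmm₁))
    have hkle : (k:ℝ) ≤ ((m+k:ℕ):ℝ) := by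
      have : k ≤ m + k := Nat.le_add_left k m
      exact_mod_cast this
    have key : ((β + ε) * ((m+k:ℕ):ℝ) - S m) * Real.log L ≤ Real.log (a (m+k)) := by
      nlinarith [h1, hlogam, mul_le_mul_of_nonneg_right hSn hlogL.le, mul_le_mul_of_nonneg_right hkle (mul_nonneg hε.le hlogL.le)]
    have h4 : L ^ ((β+ε)*((m+k:ℕ):ℝ) - S m) ≤ a (m+k) := by
      rw [Real.rpow_def_of_pos hL0]
      calc Real.exp (Real.log L * ((β+ε)*((m+k:ℕ):ℝ) - S m))
          ≤ Real.exp (Real.log (a (m+k))) := Real.exp_le_exp.mpr (by linarith [mul_comm (Real.log L) ((β+ε)*((m+k:ℕ):ℝ) - S m)])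
        _ = a (m+k) := Real.exp_log (ha _)
    have h5 : L ^ (β*((m+k:ℕ):ℝ)) * Real.log 2 ≤ L ^ ((β+ε)*((m+k:ℕ):ℝ) - S m) := by
      have heq : (β+ε)*((m+k:ℕ):ℝ) - S m = β*((m+k:ℕ):ℝ) + (ε*((m+k:ℕ):ℝ) - S m) := by ring
      rw [heq, Real.rpow_add hL0]
      have hSm : S m ≤ ε * ((m+k:ℕ):ℝ) := by
        rw [div_le_iff₀ hε] at hn2; linarith
      have h6 : Real.log 2 ≤ L ^ (ε*((m+k:ℕ):ℝ) - S m) := by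
        have hlog2 : Real.log 2 ≤ 1 := by
          linarith [Real.log_le_sub_one_of_pos (by norm_num : (0:ℝ) < 2)]
        have := Real.one_le_rpow hL1.le (by linarith : (0:ℝ) ≤ ε*((m+k:ℕ):ℝ) - S m)
        linarith
      have hpow : 0 < L ^ (β*((m+k:ℕ):ℝ)) := Real.rpow_pos_of_pos hL0 _
      nlinarith
    linarith
  filter_upwards [eventually_ge_atTop m, eventually_ge_atTop ⌈S m / ε⌉₊] with n h1 h2
  refine hfin n h1 (le_trans (Nat.le_ceil _) ?_)
  exact_mod_cast h2

/-- **Equation (exponentEx1) of Proposition 4 (abstracted core): achievable rate of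
polarization for the mixed-kernel construction.**  A `(0,1)`-valued process `X` is driven in
a first phase (up to a random, a.s. finite, switching time `T` measurable w.r.t. the first
driving sequence) by i.i.d. choices `B1 n : I₁` through maps `f1`, and afterwards by i.i.d.
uniform choices `B2 n : Fin ℓ` through maps `f2`; the two driving sequences and `X 0` are
mutually independent.  Assume `X n → X∞ ∈ {0,1}` a.s., and `f1 i n x ≤ q·x^(d1 i)`,
`f2 i n x ≤ q·x^(d2 i)` on `(0,1)` with all `d`'s `≥ 1` and some `d2 i ≥ 2`.  Then for every
`0 ≤ β < E₁ = (1/ℓ) ∑ᵢ log_ℓ (d2 i)` we have `P(X n ≤ 2^(−ℓ^(βn))) → P(X∞ = 0)`. -/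
theorem mixed_kernel_rate_of_polarization
    {Ω : Type*} [MeasureSpace Ω] [IsProbabilityMeasure (ℙ : Measure Ω)]
    (ℓ : ℕ) (hℓ : 2 ≤ ℓ)
    {I₁ : Type*} [Fintype I₁] [Nonempty I₁] [MeasurableSpace I₁]
    (B1 : ℕ → Ω → I₁) (B2 : ℕ → Ω → Fin ℓ)
    (hB1meas : ∀ n, Measurable (B1 n)) (hB2meas : ∀ n, Measurable (B2 n))
    (hB1indep : iIndepFun B1 ℙ)
    (hB1id : ∀ n, IdentDistrib (B1 n) (B1 0) ℙ ℙ)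
    (hB2indep : iIndepFun B2 ℙ)
    (hB2unif : ∀ n (i : Fin ℓ), ℙ {ω | B2 n ω = i} = 1 / ℓ)
    (X : ℕ → Ω → ℝ) (hXmeas : ∀ n, Measurable (X n))
    (hX0 : ∀ ω, X 0 ω ∈ Set.Ioo (0:ℝ) 1)
    (hmutual : iIndep
      ![⨆ n, MeasurableSpace.comap (B1 n) inferInstance,
        ⨆ n, MeasurableSpace.comap (B2 n) inferInstance,
        MeasurableSpace.comap (X 0) inferInstance] ℙ)
    (T : Ω → ℕ)
    (hTmeas : @Measurable Ω ℕ (⨆ n, MeasurableSpace.comap (B1 n) inferInstance) _ T)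
    (f1 : I₁ → ℕ → ℝ → ℝ) (f2 : Fin ℓ → ℕ → ℝ → ℝ)
    (hf1 : ∀ i n, ∀ x ∈ Set.Ioo (0:ℝ) 1, f1 i n x ∈ Set.Ioo (0:ℝ) 1)
    (hf2 : ∀ i n, ∀ x ∈ Set.Ioo (0:ℝ) 1, f2 i n x ∈ Set.Ioo (0:ℝ) 1)
    (hXrec : ∀ n ω, X (n + 1) ω =
      if n ≤ T ω then f1 (B1 n ω) n (X n ω) else f2 (B2 n ω) n (X n ω))
    (Xinf : Ω → ℝ) (hXinfMeas : Measurable Xinf)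
    (hXinfVals : ∀ᵐ ω ∂ℙ, Xinf ω = 0 ∨ Xinf ω = 1)
    (hXconv : ∀ᵐ ω ∂ℙ, Tendsto (fun n => X n ω) atTop (𝓝 (Xinf ω)))
    (q : ℝ) (hq : 0 < q)
    (d1 : I₁ → ℕ) (d2 : Fin ℓ → ℕ)
    (hd1 : ∀ i, 1 ≤ d1 i) (hd2 : ∀ i, 1 ≤ d2 i) (hd2two : ∃ i, 2 ≤ d2 i)
    (hfd1 : ∀ i n, ∀ x ∈ Set.Ioo (0:ℝ) 1, f1 i n x ≤ q * x ^ d1 i)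
    (hfd2 : ∀ i n, ∀ x ∈ Set.Ioo (0:ℝ) 1, f2 i n x ≤ q * x ^ d2 i) :
    ∀ β : ℝ, 0 ≤ β → β < (1 / (ℓ : ℝ)) * ∑ i, Real.logb ℓ (d2 i) →
      Tendsto (fun n : ℕ => ℙ {ω | X n ω ≤ (2 : ℝ) ^ (-(ℓ : ℝ) ^ (β * n))})
        atTop (𝓝 (ℙ {ω | Xinf ω = 0})) := by
  intro β hβ0 hβE₁
  have hL : (2:ℝ) ≤ (ℓ:ℝ) := by exact_mod_cast hℓ
  have hL1 : (1:ℝ) < (ℓ:ℝ) := by linarith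
  -- the process stays in (0,1)
  have hXpos : ∀ n ω, X n ω ∈ Set.Ioo (0:ℝ) 1 := by
    intro n
    induction n with
    | zero => exact hX0
    | succ n ih =>
      intro ω
      rw [hXrec n ω]
      split_ifs
      · exact hf1 _ n _ (ih ω)
      · exact hf2 _ n _ (ih ω)
  -- SLLN for logb ℓ (d2 (B2 n ·))
  set g : Fin ℓ → ℝ := fun i => Real.logb ℓ (d2 i) with hgdef
  have hgmeas : Measurable g := measurable_of_countable g
  have hmap : ∀ n, Measure.map (B2 n) ℙ = Measure.map (B2 0) ℙ := by
    intro n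
    apply MeasureTheory.Measure.ext_of_singleton
    intro i
    rw [Measure.map_apply (hB2meas n) (measurableSet_singleton i),
        Measure.map_apply (hB2meas 0) (measurableSet_singleton i)]
    rw [show B2 n ⁻¹' {i} = {ω | B2 n ω = i} from rfl, hB2unif n i,
        show B2 0 ⁻¹' {i} = {ω | B2 0 ω = i} from rfl, hB2unif 0 i]
  have hident : ∀ n, IdentDistrib (fun ω => g (B2 n ω)) (fun ω => g (B2 0 ω)) ℙ ℙ :=
    fun n => IdentDistrib.comp ⟨(hB2meas n).aemeasurable, (hB2meas 0).aemeasurable, hmap n⟩ hgmeas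
  have hindep : Pairwise (Function.onFun (IndepFun · · ℙ) (fun n ω => g (B2 n ω))) := by
    intro i j hij
    exact (hB2indep.indepFun hij).comp hgmeas hgmeas
  have hrepr : (fun ω => g (B2 0 ω))
      = fun ω => ∑ i : Fin ℓ, Set.indicator (B2 0 ⁻¹' {i}) (fun _ => g i) ω := by
    funext ω
    rw [Finset.sum_eq_single (B2 0 ω)]
    · simp [Set.indicator_of_mem, Set.mem_preimage]
    · intro b _ hb
      refine Set.indicator_of_notMem ?_ _
      simp only [Set.mem_preimage, Set.mem_singleton_iff]
      exact fun h => hb h.symm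
    · intro h; exact absurd (Finset.mem_univ _) h
  have hintegr : Integrable (fun ω => g (B2 0 ω)) ℙ := by
    rw [hrepr]
    apply integrable_finset_sum
    intro i _
    exact (integrable_const (g i)).indicator ((hB2meas 0) (measurableSet_singleton i))
  have hmean : ∫ ω, g (B2 0 ω) ∂ℙ = (1 / (ℓ : ℝ)) * ∑ i, Real.logb ℓ (d2 i) := by
    rw [hrepr, integral_finset_sum _ (fun i _ =>
      (integrable_const (g i)).indicator ((hB2meas 0) (measurableSet_singleton i)))]
    have hterm : ∀ i : Fin ℓ,
        ∫ ω, Set.indicator (B2 0 ⁻¹' {i}) (fun _ => g i) ω ∂ℙ = (1/(ℓ:ℝ)) * g i := by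
      intro i
      rw [integral_indicator ((hB2meas 0) (measurableSet_singleton i)), setIntegral_const]
      rw [show B2 0 ⁻¹' {i} = {ω | B2 0 ω = i} from rfl, measureReal_def, hB2unif 0 i]
      rw [smul_eq_mul]
      congr 1
      rw [ENNReal.toReal_div]
      simp
    rw [Finset.sum_congr rfl (fun i _ => hterm i), ← Finset.mul_sum]
  have hSLLN := strong_law_ae_real (fun n ω => g (B2 n ω)) hintegr hindep hident
  have hmean' : (ℙ : Measure Ω)[(fun (n : ℕ) (ω : Ω) => g (B2 n ω)) 0]
      = (1 / (ℓ : ℝ)) * ∑ i, Real.logb ℓ (d2 i) := hmean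
  rw [hmean'] at hSLLN
  -- conclude via indicator convergence
  have hAmble : MeasurableSet {ω | Xinf ω = 0} := by
    have : {ω | Xinf ω = 0} = Xinf ⁻¹' {0} := rfl
    rw [this]
    exact hXinfMeas (measurableSet_singleton 0)
  refine tendsto_measure_of_ae_tendsto_indicator_of_isFiniteMeasure atTop hAmble
    (fun n => measurableSet_le (hXmeas n) measurable_const) ?_
  filter_upwards [hXinfVals, hXconv, hSLLN] with ω hvals hconv hslln
  rcases hvals with h0 | h1
  · -- Xinf ω = 0 : eventually in As n
    set a : ℕ → ℝ := fun n => -Real.log (X n ω) with hadef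
    have hapos : ∀ n, 0 < a n := fun n =>
      neg_pos.mpr (Real.log_neg (hXpos n ω).1 (hXpos n ω).2)
    have hatop : Tendsto a atTop atTop := by
      have hc0 : Tendsto (fun n => X n ω) atTop (𝓝 (0:ℝ)) := h0 ▸ hconv
      have h1' : Tendsto (fun n => X n ω) atTop (𝓝[>] (0:ℝ)) :=
        tendsto_nhdsWithin_of_tendsto_nhds_of_eventually_within _ hc0
          (Eventually.of_forall fun n => (hXpos n ω).1)
      exact tendsto_neg_atBot_atTop.comp (Real.tendsto_log_nhdsGT_zero.comp h1')
    have hrec' : ∀ n, T ω < n →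
        ((d2 (B2 n ω)) : ℝ) * a n - Real.log (max q 1) ≤ a (n+1) := by
      intro n hn
      have hx := hXpos n ω
      have hx' := hXpos (n+1) ω
      have hle : X (n+1) ω ≤ max q 1 * (X n ω) ^ (d2 (B2 n ω)) := by
        rw [hXrec n ω, if_neg (by omega)]
        calc f2 (B2 n ω) n (X n ω) ≤ q * (X n ω) ^ (d2 (B2 n ω)) := hfd2 _ n _ hx
          _ ≤ max q 1 * (X n ω) ^ (d2 (B2 n ω)) :=
            mul_le_mul_of_nonneg_right (le_max_left q 1) (pow_nonneg hx.1.le _)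
      have hq1 : (1:ℝ) ≤ max q 1 := le_max_right q 1
      have hlog := Real.log_le_log hx'.1 hle
      rw [Real.log_mul (ne_of_gt (lt_of_lt_of_le one_pos hq1)) (pow_ne_zero _ (ne_of_gt hx.1)),
        Real.log_pow] at hlog
      simp only [hadef]
      linarith
    have hcore := core_polar (ℓ:ℝ) hL (Real.log (max q 1))
      (Real.log_nonneg (le_max_right q 1)) β _ hβ0 hβE₁ a hapos hatop
      (fun n => d2 (B2 n ω)) (fun n => hd2 _) (T ω) hrec' hslln
    filter_upwards [hcore] with n hn
    refine ⟨fun _ => h0, fun _ => ?_⟩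
    show X n ω ≤ (2:ℝ) ^ (-((ℓ:ℝ) ^ (β * (n:ℝ))))
    have hxpos := (hXpos n ω).1
    have hXeq : X n ω = Real.exp (Real.log (X n ω)) := (Real.exp_log hxpos).symm
    have h2eq : (2:ℝ) ^ (-((ℓ:ℝ) ^ (β * (n:ℝ))))
        = Real.exp (Real.log 2 * (-((ℓ:ℝ) ^ (β * (n:ℝ))))) :=
      Real.rpow_def_of_pos two_pos _
    rw [hXeq, h2eq]
    apply Real.exp_le_exp.mpr
    have hn' : (ℓ:ℝ) ^ (β * (n:ℝ)) * Real.log 2 ≤ -Real.log (X n ω) := hn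
    nlinarith [hn']
  · -- Xinf ω = 1 : eventually not in As n
    have hev : ∀ᶠ n in atTop, 1/2 < X n ω :=
      hconv.eventually (by rw [h1]; exact eventually_gt_nhds (by norm_num))
    filter_upwards [hev] with n hn
    constructor
    · intro hle
      exfalso
      have hle : X n ω ≤ (2:ℝ) ^ (-((ℓ:ℝ) ^ (β * (n:ℝ)))) := hle
      have h1' : (1:ℝ) ≤ (ℓ:ℝ) ^ (β * (n:ℝ)) :=
        Real.one_le_rpow (by linarith) (by positivity)
      have hbound : (2:ℝ) ^ (-((ℓ:ℝ) ^ (β * (n:ℝ)))) ≤ 1/2 := by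
        calc (2:ℝ) ^ (-((ℓ:ℝ) ^ (β * (n:ℝ)))) ≤ (2:ℝ) ^ (-1:ℝ) := by
              refine (Real.rpow_le_rpow_left_iff (by norm_num : (1:ℝ) < 2)).mpr ?_
              linarith
          _ = 1/2 := by rw [Real.rpow_neg_one]; norm_num
      linarith
    · intro h0'
      rw [h1] at h0'
      norm_num at h0'
end
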